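/- arXiv:1108.2409 — 6 statements merged into one kernel-verified Lean document; each statement's English description precedes it below -/
import Mathlib

section
/- Let V be a vector space over 𝔽₂ of finite positive dimension endowed with a symplectic form B. Let S be a linearly independent subset of V such that S is 𝓘₀-related to a set S' via replacing β ∈ S by τ_α(β) for some α, β ∈ S with B(α,β) = 1. If G(S) is the line graph of a tree, then G(S') is the line graph of a tree. -/
open Module

/-- The transvection with direction `α`, as a linear automorphism of `V`
(over `𝔽₂`, for an alternating form `B` it is an involution). -/
def transvection {V : Type} [AddCommGroup V] [Module (ZMod 2) V]
    (B : LinearMap.BilinForm (ZMod 2) V) (hB : ∀ v, B v v = 0) (α : V) :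
    V ≃ₗ[ZMod 2] V :=
  letI f : V →ₗ[ZMod 2] V :=
    { toFun := fun β => β + B β α • α
      map_add' := fun β γ => by
        simp only [map_add, LinearMap.add_apply, add_smul]
        abel
      map_smul' := fun c β => by
        simp only [map_smul, LinearMap.smul_apply, smul_eq_mul, RingHom.id_apply, smul_add,
          smul_smul] }
  haveI key : ∀ β, f (f β) = β := by
    intro β
    show (β + B β α • α) + B (β + B β α • α) α • α = β
    have h1 : B (β + B β α • α) α = B β α := by
      simp [map_add, hB α, LinearMap.add_apply, LinearMap.smul_apply]
    rw [h1]
    have h2 : B β α • α + B β α • α = (0 : V) := by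
      rw [← add_smul]
      have : B β α + B β α = 0 := by
        have : (2 : ZMod 2) = 0 := by decide
        calc B β α + B β α = 2 * B β α := by ring
        _ = 0 := by rw [this]; ring
      rw [this, zero_smul]
    rw [add_assoc, h2, add_zero]
  LinearEquiv.ofLinear f f (by ext β; exact key β) (by ext β; exact key β)

/-- the subgroup `Tv(S)` generated by the transvections with directions in `S`. -/
def Tv {V : Type} [AddCommGroup V] [Module (ZMod 2) V]
    (B : LinearMap.BilinForm (ZMod 2) V) (hB : ∀ v, B v v = 0) (S : Set V) :
    Subgroup (V ≃ₗ[ZMod 2] V) :=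
  Subgroup.closure ((fun α => transvection B hB α) '' S)

/-- The graph `G(S)`: vertex set `S`, with `α, β` adjacent iff `B α β = 1`. -/
def graphOf {V : Type} [AddCommGroup V] [Module (ZMod 2) V]
    (B : LinearMap.BilinForm (ZMod 2) V) (hB : ∀ v, B v v = 0) (S : Set V) :
    SimpleGraph S where
  Adj a b := B a b = 1
  symm := by
    constructor
    intro a b hab
    have h := hB ((a : V) + b)
    simp only [map_add, LinearMap.add_apply, hB] at h
    -- h : B b a + B a b = 0 (after simp of diagonal terms)
    have h' : B (b : V) a + B (a : V) b = 0 := by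
      simpa [hB] using h
    have : B (b : V) a = B (a : V) b := by
      have := eq_neg_of_add_eq_zero_left h'
      rwa [CharTwo.neg_eq] at this
    rw [this]; exact hab
  loopless := by
    constructor
    intro a h
    rw [hB] at h
    exact zero_ne_one h

/-- number of connected components of a graph. -/
noncomputable def numComponents {α : Type} (G : SimpleGraph α) : ℕ :=
  Nat.card G.ConnectedComponent

/-- A cut-vertex: a vertex whose deletion increases the number of components. -/
noncomputable def IsCutVertex {α : Type} (G : SimpleGraph α) (u : α) : Prop :=
  numComponents G < numComponents (G.induce {v | v ≠ u})

/-- A block: a maximal (vertex set of a) connected induced subgraph having no cut-vertex. -/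
noncomputable def IsBlock {α : Type} (G : SimpleGraph α) (A : Set α) : Prop :=
  ((G.induce A).Connected ∧ ∀ u, ¬ IsCutVertex (G.induce A) u) ∧
    ∀ A' : Set α, A ⊆ A' → ((G.induce A').Connected ∧ ∀ u, ¬ IsCutVertex (G.induce A') u) →
      A' = A

/-- A block graph: a connected graph all of whose blocks are complete. -/
noncomputable def IsBlockGraph {α : Type} (G : SimpleGraph α) : Prop :=
  G.Connected ∧ ∀ A : Set α, IsBlock G A → A.Pairwise G.Adj

/-- Claw-free: no induced subgraph isomorphic to `K_{1,3}`. -/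
def ClawFree {α : Type} (G : SimpleGraph α) : Prop :=
  IsEmpty (completeBipartiteGraph (Fin 1) (Fin 3) ↪g G)

/-- `G` is (isomorphic to) the line graph of a tree. -/
def IsLineGraphOfTree {α : Type} (G : SimpleGraph α) : Prop :=
  ∃ (W : Type) (T : SimpleGraph W), T.IsTree ∧ Nonempty (G ≃g T.lineGraph)

/-- A path graph: a tree in which every vertex has degree at most two. -/
def IsPathGraph {α : Type} (G : SimpleGraph α) : Prop :=
  G.IsTree ∧ ∀ v a b c : α, G.Adj v a → G.Adj v b → G.Adj v c → a = b ∨ a = c ∨ b = c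

/-- The relation `𝓘₀` on linearly independent subsets of `V`. -/
def IRelZero {V : Type} [AddCommGroup V] [Module (ZMod 2) V]
    (B : LinearMap.BilinForm (ZMod 2) V) (hB : ∀ v, B v v = 0) (S S' : Set V) : Prop :=
  LinearIndependent (ZMod 2) ((↑) : S → V) ∧ LinearIndependent (ZMod 2) ((↑) : S' → V) ∧
    ∃ α ∈ S, ∃ β ∈ S, S' = insert (transvection B hB α β) (S \ {β})

/-- The equivalence relation `𝓘` generated by `𝓘₀`. -/
def IRel {V : Type} [AddCommGroup V] [Module (ZMod 2) V]
    (B : LinearMap.BilinForm (ZMod 2) V) (hB : ∀ v, B v v = 0) : Set V → Set V → Prop :=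
  Relation.EqvGen (IRelZero B hB)

namespace StmtAux

lemma zmod2_add_eq_one : ∀ a b : ZMod 2, a + b = 1 ↔ ((a = 1) ↔ ¬ (b = 1)) := by decide

set_option maxHeartbeats 1000000 in
lemma sym2_core {W : Type} {v0 u w : W} (huv : u ≠ v0) (hwv : w ≠ v0) (huw : u ≠ w)
    (e : Sym2 W) (h1 : e ≠ s(v0, u)) (h2 : e ≠ s(v0, w)) (h3 : e ≠ s(u, w)) :
    (∃ z, z ∈ e ∧ z ∈ s(u, w)) ↔ ((∃ z, z ∈ e ∧ z ∈ s(v0, u)) ↔ ¬ ∃ z, z ∈ e ∧ z ∈ s(v0, w)) := by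
  induction e with
  | _ x y =>
    simp only [Sym2.mem_iff, or_and_right, exists_or, exists_eq_left, ne_eq, Sym2.eq_iff,
      not_or] at h1 h2 h3 ⊢
    push_neg at h1 h2 h3
    by_cases hxv : x = v0 <;> by_cases hxu : x = u <;> by_cases hxw : x = w <;>
      by_cases hyv : y = v0 <;> by_cases hyu : y = u <;> by_cases hyw : y = w <;>
      simp_all

lemma tree_no_triangle {W : Type} {T : SimpleGraph W} (ht : T.IsTree) {v0 u w : W}
    (hvu : T.Adj v0 u) (hvw : T.Adj v0 w) (huw : u ≠ w) : ¬ T.Adj u w := by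
  intro h
  have hp1 : (SimpleGraph.Walk.cons h SimpleGraph.Walk.nil).IsPath := by
    simp [SimpleGraph.Walk.isPath_def, huw]
  have hp2 : (SimpleGraph.Walk.cons hvu.symm
      (SimpleGraph.Walk.cons hvw SimpleGraph.Walk.nil)).IsPath := by
    simp [SimpleGraph.Walk.isPath_def, huw, hvu.ne', hvw.ne]
  have := ht.IsAcyclic.path_unique ⟨_, hp1⟩ ⟨_, hp2⟩
  have hw := congrArg (fun p : T.Path u w => p.1.length) this
  simp at hw

lemma tree_edge_slide {W : Type} {T : SimpleGraph W} (ht : T.IsTree) {v0 u w : W}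
    (hvu : T.Adj v0 u) (hvw : T.Adj v0 w) (huw : u ≠ w) :
    ((T \ SimpleGraph.fromEdgeSet {s(v0, w)}) ⊔ SimpleGraph.edge u w).IsTree := by
  set T₀ : SimpleGraph W := T \ SimpleGraph.fromEdgeSet {s(v0, w)} with hT₀
  set T' : SimpleGraph W := T₀ ⊔ SimpleGraph.edge u w with hT'
  have hT0le : T₀ ≤ T := sdiff_le
  have hA_vu : T₀.Adj v0 u := by
    refine ⟨hvu, ?_⟩
    simp only [SimpleGraph.fromEdgeSet_adj, Set.mem_singleton_iff, Sym2.eq_iff]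
    rintro ⟨h1 | h2, -⟩
    · exact huw h1.2
    · exact hvw.ne h2.1
  have hA_uw : T'.Adj u w := by
    exact Or.inr (by simp [SimpleGraph.edge_adj, huw])
  have hlift : ∀ a b : W, T.Adj a b → T'.Reachable a b := by
    intro a b hab
    by_cases h : s(a, b) = s(v0, w)
    · rw [Sym2.eq_iff] at h
      have hAvu' : T'.Adj v0 u := Or.inl hA_vu
      have hkey : T'.Reachable v0 w := hAvu'.reachable.trans hA_uw.reachable
      rcases h with ⟨h1, h2⟩ | ⟨h1, h2⟩
      · subst h1; subst h2; exact hkey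
      · subst h1; subst h2; exact hkey.symm
    · have hA : T'.Adj a b := by
        refine Or.inl ⟨hab, ?_⟩
        simp only [SimpleGraph.fromEdgeSet_adj, Set.mem_singleton_iff]
        rintro ⟨h1, -⟩
        exact h h1
      exact hA.reachable
  have hconn : T'.Connected := by
    have hne : Nonempty W := ht.isConnected.nonempty
    refine SimpleGraph.Connected.mk (fun a b => ?_)
    obtain ⟨p⟩ := ht.isConnected.preconnected a b
    induction p with
    | nil => exact SimpleGraph.Reachable.refl _
    | cons hadj p ih => exact (hlift _ _ hadj).trans ih
  have hT0acyc : T₀.IsAcyclic := fun a c hc => ht.IsAcyclic _ (hc.mapLe hT0le)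
  have hbridge : ¬ T₀.Reachable v0 w := by
    have := (SimpleGraph.isAcyclic_iff_forall_adj_isBridge.mp ht.IsAcyclic) hvw
    exact this
  have hnr_uw : ¬ T₀.Reachable u w := fun r => hbridge (hA_vu.reachable.trans r)
  have hbridge' : T'.IsBridge s(u, w) := by
    refine fun r => ?_
    have hle : T' \ SimpleGraph.fromEdgeSet {s(u, w)} ≤ T₀ := by
      intro a b hab
      rcases hab with ⟨h1 | h1, h2⟩
      · exact h1
      · exfalso
        rw [SimpleGraph.edge_adj] at h1
        simp only [SimpleGraph.fromEdgeSet_adj, Set.mem_singleton_iff] at h2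
        refine h2 ⟨?_, h1.2⟩
        rw [Sym2.eq_iff]
        tauto
    exact hnr_uw (r.mono hle)
  have hacyc : T'.IsAcyclic := by
    intro a c hc
    by_cases hmem : s(u, w) ∈ c.edges
    · exact ((SimpleGraph.isBridge_iff_mem_and_forall_cycle_notMem hA_uw).mp hbridge') c hc hmem
    · have hedges : ∀ e ∈ c.edges, e ∈ T₀.edgeSet := by
        intro e he
        have h1 : e ∈ T'.edgeSet := c.edges_subset_edgeSet he
        rw [hT', SimpleGraph.edgeSet_sup] at h1
        rcases h1 with h1 | h1
        · exact h1
        · exfalso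
          rw [SimpleGraph.edge, SimpleGraph.edgeSet_fromEdgeSet] at h1
          exact hmem (h1.1 ▸ he)
      exact hT0acyc _ ((hc.transfer hedges))
  exact ⟨hconn, hacyc⟩

lemma add_self_zmod2 {V : Type} [AddCommGroup V] [Module (ZMod 2) V] (x : V) : x + x = 0 := by
  have : ((1 : ZMod 2) + 1) • x = x + x := by rw [add_smul, one_smul]
  rw [← this, show ((1 : ZMod 2) + 1) = 0 from by decide, zero_smul]

lemma indep_not_add {V : Type} [AddCommGroup V] [Module (ZMod 2) V] {S : Set V}
    (hS : LinearIndependent (ZMod 2) ((↑) : S → V)) {α β γ : V}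
    (hα : α ∈ S) (hβ : β ∈ S) (hγ : γ ∈ S)
    (h1 : α ≠ β) (h2 : α ≠ γ) (h3 : β ≠ γ) : γ ≠ α + β := by
  intro h
  set f : Fin 3 → ↥S := ![⟨α, hα⟩, ⟨β, hβ⟩, ⟨γ, hγ⟩] with hf
  have hinj : Function.Injective f := by
    intro i j hij
    have hval := congrArg (fun t : ↥S => (t : V)) hij
    fin_cases i <;> fin_cases j <;> simp_all [hf]
  have hli : LinearIndependent (ZMod 2) (fun i => ((f i : ↥S) : V)) := hS.comp f hinj
  have := Fintype.linearIndependent_iff.mp hli (fun _ => 1) ?_ 0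
  · exact one_ne_zero this
  · rw [Fin.sum_univ_three]
    simp only [one_smul, hf, Matrix.cons_val_zero, Matrix.cons_val_one, Matrix.head_cons,
      Matrix.cons_val_two, Matrix.tail_cons]
    rw [h]
    rw [show α + β + (α + β) = 0 from add_self_zmod2 _]

end StmtAux
/-- If `S` is linearly independent, `α, β ∈ S` with `B α β = 1`, and `S'` is
obtained from `S` by replacing `β` with `τ_α β`, then `G(S)` being the line graph of a tree
implies `G(S')` is the line graph of a tree. -/

theorem stmt5 {V : Type} [AddCommGroup V] [Module (ZMod 2) V] [FiniteDimensional (ZMod 2) V]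
    (hdim : 0 < Module.finrank (ZMod 2) V)
    (B : LinearMap.BilinForm (ZMod 2) V) (hB : ∀ v, B v v = 0)
    (S : Set V) (hS : LinearIndependent (ZMod 2) ((↑) : S → V))
    (α β : V) (hα : α ∈ S) (hβ : β ∈ S) (hαβ : B α β = 1)
    (S' : Set V) (hS' : S' = insert (transvection B hB α β) (S \ {β}))
    (h : IsLineGraphOfTree (graphOf B hB S)) :
    IsLineGraphOfTree (graphOf B hB S') := by
  classical
  -- symmetry of B
  have hsymm : ∀ x y : V, B x y = B y x := by
    intro x y
    have h0 := hB (x + y)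
    simp only [map_add, LinearMap.add_apply, hB] at h0
    have h0' : B x y + B y x = 0 := by linear_combination h0
    have := eq_neg_of_add_eq_zero_left h0'
    rwa [CharTwo.neg_eq] at this
  set τ : V := transvection B hB α β with hτdef
  have hτ : τ = β + α := by
    show (transvection B hB α) β = β + α
    rw [transvection, LinearEquiv.ofLinear_apply]
    show β + B β α • α = β + α
    rw [hsymm β α, hαβ, one_smul]
  have hαβne : α ≠ β := by
    intro hh
    rw [hh, hB] at hαβ
    exact zero_ne_one hαβ
  have hβ0 : β ≠ 0 := by
    intro hh
    rw [hh, map_zero] at hαβ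
    exact zero_ne_one hαβ
  -- no element of S other than β equals τ
  have hkey : ∀ γ ∈ S, γ ≠ β → γ ≠ τ := by
    intro γ hγ hγβ hh
    rw [hτ] at hh
    by_cases hγα : γ = α
    · rw [hγα] at hh
      have : β = 0 := by
        have := hh
        nth_rewrite 1 [show (α : V) = 0 + α from (zero_add α).symm] at this
        exact (add_right_cancel this).symm
      exact hβ0 this
    · exact StmtAux.indep_not_add hS hα hβ hγ hαβne (Ne.symm hγα) (Ne.symm hγβ)
        (hh.trans (add_comm β α))
  have hτS' : τ ∈ S' := by rw [hS']; exact Set.mem_insert _ _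
  have hmemS' : ∀ x : V, x ∈ S' ↔ x = τ ∨ (x ∈ S ∧ x ≠ β) := by
    intro x
    rw [hS']
    simp [Set.mem_insert_iff, Set.mem_diff]
  -- the equivalence m : S' ≃ S
  have hτβ : τ ≠ β := by
    rw [hτ]
    intro hh
    nth_rewrite 2 [show (β : V) = β + 0 from (add_zero β).symm] at hh
    have : α = 0 := add_left_cancel hh
    rw [this, map_zero, LinearMap.zero_apply] at hαβ
    exact zero_ne_one hαβ
  set m : ↥S' ≃ ↥S :=
    { toFun := fun x => if hx : (x : V) = τ then ⟨β, hβ⟩ else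
        ⟨x, (((hmemS' x).mp x.2).resolve_left hx).1⟩
      invFun := fun y => if hy : (y : V) = β then ⟨τ, hτS'⟩ else
        ⟨y, (hmemS' y).mpr (Or.inr ⟨y.2, hy⟩)⟩
      left_inv := by
        intro x
        dsimp only
        by_cases hx : (x : V) = τ
        · rw [dif_pos hx, dif_pos rfl]
          exact Subtype.ext hx.symm
        · rw [dif_neg hx]
          have hxβ : (x : V) ≠ β := (((hmemS' x).mp x.2).resolve_left hx).2
          rw [dif_neg hxβ]
      right_inv := by
        intro y
        dsimp only
        by_cases hy : (y : V) = β
        · rw [dif_pos hy, dif_pos rfl]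
          exact Subtype.ext hy.symm
        · rw [dif_neg hy, dif_neg (hkey y y.2 hy)] } with hmdef
  have hm_val : ∀ (x : ↥S') (hx : (x : V) ≠ τ), ((m x : ↥S) : V) = (x : V) := by
    intro x hx
    rw [hmdef]
    simp only [Equiv.coe_fn_mk]
    rw [dif_neg hx]
  have hm_τ : ∀ (x : ↥S') (hx : (x : V) = τ), m x = ⟨β, hβ⟩ := by
    intro x hx
    rw [hmdef]
    simp only [Equiv.coe_fn_mk]
    rw [dif_pos hx]
  -- unpack the line-graph-of-tree structure
  obtain ⟨W, T, ht, ⟨φ⟩⟩ := h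
  have hadjS : (graphOf B hB S).Adj ⟨α, hα⟩ ⟨β, hβ⟩ := hαβ
  have hadjL : T.lineGraph.Adj (φ ⟨α, hα⟩) (φ ⟨β, hβ⟩) := φ.map_rel_iff.mpr hadjS
  rw [SimpleGraph.lineGraph_adj_iff_exists] at hadjL
  obtain ⟨hne_ab, v0, hv0α, hv0β⟩ := hadjL
  set eα : T.edgeSet := φ ⟨α, hα⟩ with heαdef
  set eβ : T.edgeSet := φ ⟨β, hβ⟩ with heβdef
  set u : W := Sym2.Mem.other hv0α with hudef
  set w : W := Sym2.Mem.other hv0β with hwdef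
  have heα : (eα : Sym2 W) = s(v0, u) := (Sym2.other_spec hv0α).symm
  have heβ : (eβ : Sym2 W) = s(v0, w) := (Sym2.other_spec hv0β).symm
  have hTadj_vu : T.Adj v0 u := by
    rw [← SimpleGraph.mem_edgeSet, ← heα]; exact eα.2
  have hTadj_vw : T.Adj v0 w := by
    rw [← SimpleGraph.mem_edgeSet, ← heβ]; exact eβ.2
  have hu_ne : u ≠ v0 := hTadj_vu.ne'
  have hw_ne : w ≠ v0 := hTadj_vw.ne'
  have huw : u ≠ w := by
    intro hh
    exact hne_ab (Subtype.ext (by rw [heα, heβ, hh]))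
  have hnadj_uw : ¬ T.Adj u w := StmtAux.tree_no_triangle ht hTadj_vu hTadj_vw huw
  have huwE : s(u, w) ∉ T.edgeSet := fun hh => hnadj_uw hh
  set T' : SimpleGraph W := (T \ SimpleGraph.fromEdgeSet {s(v0, w)}) ⊔ SimpleGraph.edge u w
    with hT'def
  have ht' : T'.IsTree := StmtAux.tree_edge_slide ht hTadj_vu hTadj_vw huw
  have hmemT' : ∀ e : Sym2 W, e ∈ T'.edgeSet ↔ (e ∈ T.edgeSet ∧ e ≠ s(v0, w)) ∨ e = s(u, w) := by
    intro e
    rw [hT'def, SimpleGraph.edgeSet_sup, SimpleGraph.edgeSet_sdiff,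
      SimpleGraph.edgeSet_fromEdgeSet, SimpleGraph.edge, SimpleGraph.edgeSet_fromEdgeSet]
    have h1 : ¬ (s(v0, w)).IsDiag := by simp [Sym2.mk_isDiag_iff]; exact hw_ne.symm
    have h2 : ¬ (s(u, w)).IsDiag := by simp [Sym2.mk_isDiag_iff]; exact huw
    constructor
    · rintro (⟨ha, hb⟩ | ⟨ha, -⟩)
      · refine Or.inl ⟨ha, ?_⟩
        intro hh
        exact hb ⟨hh, fun hd => h1 (by rwa [hh] at hd)⟩
      · exact Or.inr ha
    · rintro (⟨ha, hb⟩ | ha)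
      · refine Or.inl ⟨ha, ?_⟩
        rintro ⟨hc, -⟩
        exact hb hc
      · exact Or.inr ⟨ha, fun hh => h2 (by rwa [ha] at hh)⟩
  have hmem_kuw : s(u, w) ∈ T'.edgeSet := (hmemT' _).mpr (Or.inr rfl)
  have heβval : (eβ : Sym2 W) ≠ s(u, w) := by
    rw [heβ]
    rw [ne_eq, Sym2.eq_iff]
    rintro (⟨h1, -⟩ | ⟨-, h2⟩)
    · exact hu_ne h1.symm
    · exact huw h2.symm
  have hTval_ne : ∀ e : T.edgeSet, (e : Sym2 W) ≠ s(u, w) := by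
    intro e hh
    exact huwE (hh ▸ e.2)
  set k : ↥T.edgeSet ≃ ↥T'.edgeSet :=
    { toFun := fun e => if he : e = eβ then ⟨s(u, w), hmem_kuw⟩ else
        ⟨e.1, (hmemT' _).mpr (Or.inl ⟨e.2,
          fun hh => he (Subtype.ext (hh.trans heβ.symm))⟩)⟩
      invFun := fun f => if hf : (f : Sym2 W) = s(u, w) then eβ else
        ⟨f.1, (((hmemT' f.1).mp f.2).resolve_right hf).1⟩
      left_inv := by
        intro e
        dsimp only
        by_cases he : e = eβ
        · rw [dif_pos he, dif_pos rfl]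
          exact he.symm
        · rw [dif_neg he, dif_neg (hTval_ne e)]
      right_inv := by
        intro f
        dsimp only
        by_cases hf : (f : Sym2 W) = s(u, w)
        · rw [dif_pos hf, dif_pos rfl]
          exact Subtype.ext hf.symm
        · rw [dif_neg hf]
          have : (⟨(f : Sym2 W), (((hmemT' f.1).mp f.2).resolve_right hf).1⟩ : ↥T.edgeSet) ≠ eβ := by
            intro hh
            have := congrArg (fun t : ↥T.edgeSet => (t : Sym2 W)) hh
            simp only at this
            rw [heβ] at this
            exact (((hmemT' f.1).mp f.2).resolve_right hf).2 this
          rw [dif_neg this] } with hkdef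
  have hk_val : ∀ (e : ↥T.edgeSet) (he : e ≠ eβ), ((k e : ↥T'.edgeSet) : Sym2 W) = (e : Sym2 W) := by
    intro e he
    rw [hkdef]
    simp only [Equiv.coe_fn_mk]
    rw [dif_neg he]
  have hk_β : ((k eβ : ↥T'.edgeSet) : Sym2 W) = s(u, w) := by
    rw [hkdef]
    simp
  set F : ↥S' ≃ ↥T'.edgeSet := m.trans (φ.toEquiv.trans k) with hFdef
  have hFval : ∀ x : ↥S', F x = k (φ (m x)) := fun x => rfl
  have hB_iff : ∀ a b : ↥S, (B (a : V) (b : V) = 1) ↔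
      (φ a ≠ φ b ∧ ∃ z, z ∈ ((φ a : ↥T.edgeSet) : Sym2 W) ∧
        z ∈ ((φ b : ↥T.edgeSet) : Sym2 W)) := by
    intro a b
    rw [← SimpleGraph.lineGraph_adj_iff_exists]
    exact ⟨fun hh => φ.map_rel_iff.mpr hh, fun hh => φ.map_rel_iff.mp hh⟩
  -- main asymmetric case
  have main : ∀ x y : ↥S', (x : V) ≠ τ → (y : V) = τ →
      (T'.lineGraph.Adj (F x) (F y) ↔ B (x : V) (y : V) = 1) := by
    intro x y hx hy
    have hmx : ((m x : ↥S) : V) = (x : V) := hm_val x hx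
    have hmy : m y = ⟨β, hβ⟩ := hm_τ y hy
    have hFy : ((F y : ↥T'.edgeSet) : Sym2 W) = s(u, w) := by
      rw [hFval, hmy, ← heβdef]; exact hk_β
    have hxβ : (x : V) ≠ β := (((hmemS' x).mp x.2).resolve_left hx).2
    have hmxβ : m x ≠ ⟨β, hβ⟩ := fun hh => hxβ (by rw [← hmx, hh])
    have hφx_ne_β : φ (m x) ≠ eβ := fun hh => hmxβ (φ.toEquiv.injective hh)
    have hFx : ((F x : ↥T'.edgeSet) : Sym2 W) = ((φ (m x) : ↥T.edgeSet) : Sym2 W) := by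
      rw [hFval]; exact hk_val _ hφx_ne_β
    set E : Sym2 W := ((φ (m x) : ↥T.edgeSet) : Sym2 W) with hEdef
    have hEneuw : E ≠ s(u, w) := hTval_ne _
    have hFne : F x ≠ F y := by
      intro hh
      have := congrArg (fun t : ↥T'.edgeSet => (t : Sym2 W)) hh
      rw [hFx, hFy] at this
      exact hEneuw this
    rw [SimpleGraph.lineGraph_adj_iff_exists]
    rw [hy, hτ, map_add]
    have hzmod := StmtAux.zmod2_add_eq_one (B (x : V) β) (B (x : V) α)
    by_cases hxα : (x : V) = α
    · have hmxα : m x = ⟨α, hα⟩ := Subtype.ext (by rw [hmx, hxα])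
      have hE : E = s(v0, u) := by rw [hEdef, hmxα, ← heαdef, heα]
      refine iff_of_true ⟨hFne, ⟨u, ?_, ?_⟩⟩ ?_
      · rw [hFx, hE]; simp
      · rw [hFy]; simp
      · rw [hxα, hαβ, hB α, add_zero]
    · have hφx_ne_α : φ (m x) ≠ eα := by
        intro hh
        exact hxα (by rw [← hmx, φ.toEquiv.injective hh])
      have hEα : E ≠ s(v0, u) := by
        intro hh
        exact hφx_ne_α (Subtype.ext (by rw [← heα] at hh; exact hh))
      have hEβ : E ≠ s(v0, w) := by
        intro hh
        exact hφx_ne_β (Subtype.ext (by rw [← heβ] at hh; exact hh))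
      have hcore := StmtAux.sym2_core hu_ne hw_ne huw E hEα hEβ hEneuw
      have hBα : (B (x : V) α = 1) ↔ ∃ z, z ∈ E ∧ z ∈ s(v0, u) := by
        have hh := hB_iff (m x) ⟨α, hα⟩
        rw [hmx] at hh
        rw [hh, ← heαdef, heα]
        simp [hφx_ne_α]
        exact Iff.rfl
      have hBβ : (B (x : V) β = 1) ↔ ∃ z, z ∈ E ∧ z ∈ s(v0, w) := by
        have hh := hB_iff (m x) ⟨β, hβ⟩
        rw [hmx] at hh
        rw [hh, ← heβdef, heβ]
        simp [hφx_ne_β]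
        exact Iff.rfl
      rw [hzmod]
      rw [← hBα, ← hBβ] at hcore
      constructor
      · rintro ⟨-, hsh⟩
        rw [hFx, hFy] at hsh
        exact iff_not_comm.mp (hcore.mp hsh)
      · intro hh
        refine ⟨hFne, ?_⟩
        rw [hFx, hFy]
        exact hcore.mpr (iff_not_comm.mpr hh)
  -- assemble the isomorphism
  refine ⟨W, T', ht', ⟨⟨F, ?_⟩⟩⟩
  intro x y
  show T'.lineGraph.Adj (F x) (F y) ↔ (graphOf B hB S').Adj x y
  have hG' : ∀ a b : ↥S', (graphOf B hB S').Adj a b ↔ B (a : V) (b : V) = 1 :=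
    fun _ _ => Iff.rfl
  rw [hG']
  by_cases hx : (x : V) = τ <;> by_cases hy : (y : V) = τ
  · have hxy : x = y := Subtype.ext (hx.trans hy.symm)
    subst hxy
    exact iff_of_false (T'.lineGraph.irrefl) (by rw [hB]; exact zero_ne_one)
  · have h1 := main y x hy hx
    calc T'.lineGraph.Adj (F x) (F y) ↔ T'.lineGraph.Adj (F y) (F x) :=
          SimpleGraph.adj_comm _ _ _
      _ ↔ B (y : V) (x : V) = 1 := h1
      _ ↔ B (x : V) (y : V) = 1 := by rw [hsymm]
  · exact main x y hx hy
  · -- neither is τ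
    have hmx : ((m x : ↥S) : V) = (x : V) := hm_val x hx
    have hmy : ((m y : ↥S) : V) = (y : V) := hm_val y hy
    have hxβ : (x : V) ≠ β := (((hmemS' x).mp x.2).resolve_left hx).2
    have hyβ : (y : V) ≠ β := (((hmemS' y).mp y.2).resolve_left hy).2
    have hφx_ne_β : φ (m x) ≠ eβ :=
      fun hh => hxβ (by rw [← hmx, φ.toEquiv.injective hh])
    have hφy_ne_β : φ (m y) ≠ eβ :=
      fun hh => hyβ (by rw [← hmy, φ.toEquiv.injective hh])
    have hFx : ((F x : ↥T'.edgeSet) : Sym2 W) = ((φ (m x) : ↥T.edgeSet) : Sym2 W) := by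
      rw [hFval]; exact hk_val _ hφx_ne_β
    have hFy : ((F y : ↥T'.edgeSet) : Sym2 W) = ((φ (m y) : ↥T.edgeSet) : Sym2 W) := by
      rw [hFval]; exact hk_val _ hφy_ne_β
    have hBxy := hB_iff (m x) (m y)
    rw [hmx, hmy] at hBxy
    rw [SimpleGraph.lineGraph_adj_iff_exists, hBxy, hFx, hFy]
    have hne_iff : F x ≠ F y ↔ φ (m x) ≠ φ (m y) := by
      constructor
      · intro hh hc
        exact hh (by rw [hFval, hFval, hc])
      · intro hh hc
        exact hh (φ.toEquiv.congr_arg (m.congr_arg (F.injective hc)))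
    rw [hne_iff]
end

section
/- Let n ≥ 3, let V = 𝔽₂ⁿ with standard basis α₁,…,αₙ, and let B be the symplectic form on V determined by B(αᵢ,αⱼ) = 1 if |i−j| = 1 and B(αᵢ,αⱼ) = 0 otherwise. Let S = {α₁,…,αₙ} ∪ {α₁+α₂}. Then S spans V, the group Tv(S) is isomorphic to a symmetric group, but the graph G(S) is not a block graph. (In particular, the claim that for a spanning set S, Tv(S) being isomorphic to a symmetric group implies G(S) is a claw-free block graph, is false.) -/
open Module

namespace Stmt7Aux

variable (n : ℕ)

/-- difference map `V → 𝔽₂^{n+1}`, sending `αᵢ` to `δᵢ + δᵢ₊₁`. -/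
def Dmap : (Fin n → ZMod 2) →ₗ[ZMod 2] (Fin (n+1) → ZMod 2) where
  toFun x j := ∑ i : Fin n, if j = i.castSucc ∨ j = i.succ then x i else 0
  map_add' x y := by
    funext j
    simp only [Pi.add_apply, ← Finset.sum_add_distrib]
    refine Finset.sum_congr rfl fun i _ => ?_
    split <;> simp
  map_smul' c x := by
    funext j
    simp only [Pi.smul_apply, RingHom.id_apply, Finset.smul_sum]
    refine Finset.sum_congr rfl fun i _ => ?_
    split <;> simp

/-- partial-sum map `𝔽₂^{n+1} → V`. -/
def Emap : (Fin (n+1) → ZMod 2) →ₗ[ZMod 2] (Fin n → ZMod 2) where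
  toFun w i := ∑ j : Fin (n+1), if j ≤ i.castSucc then w j else 0
  map_add' x y := by
    funext i
    simp only [Pi.add_apply, ← Finset.sum_add_distrib]
    refine Finset.sum_congr rfl fun j _ => ?_
    split <;> simp
  map_smul' c x := by
    funext i
    simp only [Pi.smul_apply, RingHom.id_apply, Finset.smul_sum]
    refine Finset.sum_congr rfl fun j _ => ?_
    split <;> simp

/-- permutation of coordinates. -/
def Mmap (σ : Equiv.Perm (Fin (n+1))) :
    (Fin (n+1) → ZMod 2) →ₗ[ZMod 2] (Fin (n+1) → ZMod 2) where
  toFun w := fun j => w (σ⁻¹ j)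
  map_add' x y := rfl
  map_smul' c x := rfl

lemma Dmap_apply (x : Fin n → ZMod 2) (j : Fin (n+1)) :
    Dmap n x j = ∑ i : Fin n, if j = i.castSucc ∨ j = i.succ then x i else 0 := rfl

lemma Emap_apply (w : Fin (n+1) → ZMod 2) (i : Fin n) :
    Emap n w i = ∑ j : Fin (n+1), if j ≤ i.castSucc then w j else 0 := rfl

lemma Mmap_apply (σ : Equiv.Perm (Fin (n+1))) (w) (j) : Mmap n σ w j = w (σ⁻¹ j) := rfl

lemma ED (x : Fin n → ZMod 2) : Emap n (Dmap n x) = x := by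
  funext l
  rw [Emap_apply]
  have step : ∀ j : Fin (n+1), (if j ≤ l.castSucc then Dmap n x j else 0)
      = ∑ i : Fin n, if j ∈ ({i.castSucc, i.succ} : Finset (Fin (n+1))) then
          (if j ≤ l.castSucc then x i else 0) else 0 := by
    intro j
    rw [Dmap_apply]
    split
    · exact Finset.sum_congr rfl fun i _ => by
        simp only [Finset.mem_insert, Finset.mem_singleton]
    · simp
  simp only [step]
  rw [Finset.sum_comm]
  have inner : ∀ i : Fin n, (∑ j : Fin (n+1), if j ∈ ({i.castSucc, i.succ} : Finset (Fin (n+1)))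
      then (if j ≤ l.castSucc then x i else 0) else 0) = if i = l then x i else 0 := by
    intro i
    rw [Finset.sum_ite_mem, Finset.univ_inter,
      Finset.sum_pair (by simp [Fin.ext_iff])]
    have hi := i.isLt; have hl := l.isLt
    simp only [Fin.le_def, Fin.ext_iff, Fin.coe_castSucc, Fin.val_succ]
    split_ifs <;> first | omega | simp [CharTwo.add_self_eq_zero] | omega
  simp only [inner]
  simp


lemma sumD (x : Fin n → ZMod 2) : ∑ j, Dmap n x j = 0 := by
  simp only [Dmap_apply]
  rw [Finset.sum_comm]
  rw [Finset.sum_eq_zero]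
  intro i _
  have : ∀ j : Fin (n+1), (if j = i.castSucc ∨ j = i.succ then x i else 0)
      = (if j ∈ ({i.castSucc, i.succ} : Finset (Fin (n+1))) then x i else 0) := by
    intro j; simp only [Finset.mem_insert, Finset.mem_singleton]
  simp only [this]
  rw [Finset.sum_ite_mem, Finset.univ_inter, Finset.sum_pair (by simp [Fin.ext_iff])]
  exact CharTwo.add_self_eq_zero _

lemma sumM (σ : Equiv.Perm (Fin (n+1))) (w : Fin (n+1) → ZMod 2) :
    ∑ j, Mmap n σ w j = ∑ j, w j :=
  Equiv.sum_comp σ⁻¹ w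

lemma DE (hn : 0 < n) (w : Fin (n+1) → ZMod 2) (hw : ∑ j, w j = 0) : Dmap n (Emap n w) = w := by
  funext m
  rw [Dmap_apply]
  rcases Nat.lt_or_ge (m : ℕ) n with hm | hm
  · -- m < n
    rcases Nat.eq_zero_or_pos (m : ℕ) with h0 | h0
    · -- m = 0 : only k = ⟨0⟩ contributes
      have cond : ∀ i : Fin n, (m = i.castSucc ∨ m = i.succ) ↔ i = ⟨(m : ℕ), hm⟩ := by
        intro i
        simp only [Fin.ext_iff, Fin.coe_castSucc, Fin.val_succ]
        omega
      simp only [cond]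
      rw [Finset.sum_ite_eq' Finset.univ, if_pos (Finset.mem_univ _)]
      rw [Emap_apply]
      have c2 : ∀ j : Fin (n+1), (j ≤ Fin.castSucc ⟨(m : ℕ), hm⟩) ↔ j = m := by
        intro j
        simp only [Fin.le_def, Fin.ext_iff, Fin.coe_castSucc]
        omega
      simp only [c2]
      simp
    · -- 0 < m < n : k = ⟨m⟩ and k = ⟨m-1⟩ contribute
      have hm1 : (m : ℕ) - 1 < n := by omega
      have cond : ∀ i : Fin n, (m = i.castSucc ∨ m = i.succ) ↔
          (i ∈ ({⟨(m : ℕ), hm⟩, ⟨(m : ℕ) - 1, hm1⟩} : Finset (Fin n))) := by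
        intro i
        simp only [Finset.mem_insert, Finset.mem_singleton, Fin.ext_iff, Fin.coe_castSucc,
          Fin.val_succ]
        omega
      simp only [cond]
      rw [Finset.sum_ite_mem, Finset.univ_inter,
        Finset.sum_pair (by simp only [ne_eq, Fin.ext_iff]; omega)]
      rw [Emap_apply, Emap_apply, ← Finset.sum_add_distrib]
      have key : ∀ j : Fin (n+1),
          ((if j ≤ Fin.castSucc ⟨(m : ℕ), hm⟩ then w j else 0) +
            (if j ≤ Fin.castSucc ⟨(m : ℕ) - 1, hm1⟩ then w j else 0)) =
          (if j = m then w j else 0) := by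
        intro j
        simp only [Fin.le_def, Fin.coe_castSucc, Fin.ext_iff]
        split_ifs <;> first | omega | simp [CharTwo.add_self_eq_zero] | omega
      simp only [key]
      simp
  · -- m = n : only k = ⟨n-1⟩ contributes
    have hmn : (m : ℕ) = n := by have := m.isLt; omega
    have hm1 : (m : ℕ) - 1 < n := by omega
    have cond : ∀ i : Fin n, (m = i.castSucc ∨ m = i.succ) ↔ i = ⟨(m : ℕ) - 1, hm1⟩ := by
      intro i
      have := i.isLt
      simp only [Fin.ext_iff, Fin.coe_castSucc, Fin.val_succ]
      omega
    simp only [cond]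
    rw [Finset.sum_ite_eq' Finset.univ, if_pos (Finset.mem_univ _)]
    rw [Emap_apply]
    -- ∑_{j ≤ n-1} w j = ∑ j, w j + w m = w m
    have key : ∀ j : Fin (n+1),
        (if j ≤ Fin.castSucc ⟨(m : ℕ) - 1, hm1⟩ then w j else 0) =
        w j + (if j = m then w j else 0) := by
      intro j
      have := j.isLt
      simp only [Fin.le_def, Fin.coe_castSucc, Fin.ext_iff]
      split_ifs <;> first | omega | simp [CharTwo.add_self_eq_zero] | omega
    simp only [key]
    rw [Finset.sum_add_distrib, hw, zero_add]
    simp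


lemma MM (σ τ : Equiv.Perm (Fin (n+1))) (w : Fin (n+1) → ZMod 2) :
    Mmap n σ (Mmap n τ w) = Mmap n (σ * τ) w := by
  funext j
  simp [Mmap_apply, mul_inv_rev, Equiv.Perm.mul_apply]

lemma EMDEMD (hn : 0 < n) (σ τ : Equiv.Perm (Fin (n+1))) (x : Fin n → ZMod 2) :
    Emap n (Mmap n σ (Dmap n (Emap n (Mmap n τ (Dmap n x))))) =
      Emap n (Mmap n (σ * τ) (Dmap n x)) := by
  rw [DE n hn _ (by rw [sumM, sumD]), MM]

lemma Mone (w : Fin (n+1) → ZMod 2) : Mmap n 1 w = w := rfl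

/-- The action of `Perm (Fin (n+1))` on `V = 𝔽₂ⁿ`. -/
def PhiFun (hn : 0 < n) (σ : Equiv.Perm (Fin (n+1))) :
    (Fin n → ZMod 2) ≃ₗ[ZMod 2] (Fin n → ZMod 2) :=
  LinearEquiv.ofLinear (Emap n ∘ₗ Mmap n σ ∘ₗ Dmap n) (Emap n ∘ₗ Mmap n σ⁻¹ ∘ₗ Dmap n)
    (by ext x
        simp only [LinearMap.coe_comp, Function.comp_apply, LinearMap.id_coe, id_eq]
        rw [EMDEMD n hn, mul_inv_cancel]
        rw [Mone, ED])
    (by ext x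
        simp only [LinearMap.coe_comp, Function.comp_apply, LinearMap.id_coe, id_eq]
        rw [EMDEMD n hn, inv_mul_cancel]
        rw [Mone, ED])

lemma PhiFun_apply (hn : 0 < n) (σ : Equiv.Perm (Fin (n+1))) (x : Fin n → ZMod 2) :
    PhiFun n hn σ x = Emap n (Mmap n σ (Dmap n x)) := rfl

/-- `PhiFun` as a group homomorphism. -/
def Phi (hn : 0 < n) :
    Equiv.Perm (Fin (n+1)) →* ((Fin n → ZMod 2) ≃ₗ[ZMod 2] (Fin n → ZMod 2)) where
  toFun := PhiFun n hn
  map_one' := by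
    apply LinearEquiv.toLinearMap_injective
    apply LinearMap.ext
    intro x
    show PhiFun n hn 1 x = x
    rw [PhiFun_apply, Mone, ED]
  map_mul' σ τ := by
    apply LinearEquiv.toLinearMap_injective
    apply LinearMap.ext
    intro x
    show PhiFun n hn (σ * τ) x = PhiFun n hn σ (PhiFun n hn τ x)
    rw [PhiFun_apply, PhiFun_apply, PhiFun_apply, EMDEMD n hn]

lemma Phi_injective (hn3 : 3 ≤ n) (hn : 0 < n) : Function.Injective (Phi n hn) := by
  rw [← MonoidHom.ker_eq_bot_iff, eq_bot_iff]
  intro σ hσ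
  simp only [MonoidHom.mem_ker] at hσ
  -- from Phi σ = 1, deduce M σ fixes D x for all x
  have hfix : ∀ x : Fin n → ZMod 2, Mmap n σ (Dmap n x) = Dmap n x := by
    intro x
    have h1 : PhiFun n hn σ x = x := by
      rw [show PhiFun n hn σ = Phi n hn σ from rfl, hσ]; rfl
    have h2 : Dmap n (Emap n (Mmap n σ (Dmap n x))) = Mmap n σ (Dmap n x) :=
      DE n hn _ (by rw [sumM, sumD])
    rw [← h2, show Emap n (Mmap n σ (Dmap n x)) = PhiFun n hn σ x from rfl, h1]
  -- value of D on basis vectors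
  have hDsingle : ∀ (k : Fin n) (j : Fin (n+1)),
      Dmap n (Pi.single k 1) j = if j = k.castSucc ∨ j = k.succ then 1 else 0 := by
    intro k j
    rw [Dmap_apply]
    have : ∀ i : Fin n, (if j = i.castSucc ∨ j = i.succ then (Pi.single k 1 : Fin n → ZMod 2) i else 0)
        = if i = k then (if j = k.castSucc ∨ j = k.succ then 1 else 0) else 0 := by
      intro i
      rcases eq_or_ne i k with rfl | hik
      · simp [Pi.single_eq_same]
      · simp [Pi.single_eq_of_ne hik, hik]
    simp only [this]
    rw [Finset.sum_ite_eq' Finset.univ, if_pos (Finset.mem_univ _)]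
  -- membership condition
  have hmem : ∀ (k : Fin n) (j : Fin (n+1)),
      (σ⁻¹ j = k.castSucc ∨ σ⁻¹ j = k.succ) ↔ (j = k.castSucc ∨ j = k.succ) := by
    intro k j
    have := congrFun (hfix (Pi.single k 1)) j
    rw [Mmap_apply, hDsingle, hDsingle] at this
    constructor
    · intro h
      by_contra hc
      rw [if_pos h, if_neg hc] at this
      exact one_ne_zero this
    · intro h
      by_contra hc
      rw [if_neg hc, if_pos h] at this
      exact one_ne_zero this.symm
  have hpair : ∀ k : Fin n, (σ k.castSucc = k.castSucc ∨ σ k.castSucc = k.succ) ∧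
      (σ k.succ = k.castSucc ∨ σ k.succ = k.succ) := by
    intro k
    constructor
    · have := (hmem k (σ k.castSucc)).mp (by rw [← Equiv.Perm.mul_apply, inv_mul_cancel, Equiv.Perm.one_apply]; left; rfl)
      exact this
    · have := (hmem k (σ k.succ)).mp (by rw [← Equiv.Perm.mul_apply, inv_mul_cancel, Equiv.Perm.one_apply]; right; rfl)
      exact this
  -- now prove σ = 1 by induction
  have main : ∀ t : ℕ, ∀ h : t < n + 1, σ ⟨t, h⟩ = ⟨t, h⟩ := by
    intro t
    induction t with
    | zero =>
      intro h
      have h0 : (0 : ℕ) < n := hn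
      have h1 : (1 : ℕ) < n := by omega
      have q0 := (hpair ⟨0, h0⟩).1
      have q1 := (hpair ⟨0, h0⟩).2
      have q2 := (hpair ⟨1, h1⟩).1
      have h1n : (1 : ℕ) < n + 1 := by omega
      have h2n : (2 : ℕ) < n + 1 := by omega
      have e0 : (Fin.castSucc ⟨0, h0⟩ : Fin (n+1)) = ⟨0, h⟩ := rfl
      have e1 : (Fin.succ ⟨0, h0⟩ : Fin (n+1)) = ⟨1, h1n⟩ := rfl
      have e1' : (Fin.castSucc ⟨1, h1⟩ : Fin (n+1)) = ⟨1, h1n⟩ := rfl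
      have e2 : (Fin.succ ⟨1, h1⟩ : Fin (n+1)) = ⟨2, h2n⟩ := rfl
      rw [e0, e1] at q0
      rw [e1, e0] at q1
      rw [e1', e2] at q2
      rcases q0 with h' | h'
      · exact h'
      · exfalso
        rcases q1 with h'' | h''
        · rcases q2 with h3 | h3
          · rw [h''] at h3
            exact absurd (Fin.mk_eq_mk.mp h3) (by omega)
          · rw [h''] at h3
            exact absurd (Fin.mk_eq_mk.mp h3) (by omega)
        · exact absurd (Fin.mk_eq_mk.mp (σ.injective (h'.trans h''.symm))) (by omega)
    | succ t ih =>
      intro h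
      have ht : t < n := by omega
      have pt := (hpair ⟨t, ht⟩).2
      have es : (Fin.succ ⟨t, ht⟩ : Fin (n+1)) = ⟨t+1, h⟩ := rfl
      have ec : (Fin.castSucc ⟨t, ht⟩ : Fin (n+1)) = ⟨t, by omega⟩ := rfl
      rw [es, ec] at pt
      rcases pt with h' | h'
      · exfalso
        have hIH := ih (by omega)
        exact absurd (Fin.mk_eq_mk.mp (σ.injective (h'.trans hIH.symm))) (by omega)
      · exact h'
  apply Subgroup.mem_bot.mpr
  ext j
  have := main (j : ℕ) j.isLt
  simp only [Fin.eta] at this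
  rw [this]
  rfl


lemma transvection_apply {V : Type} [AddCommGroup V] [Module (ZMod 2) V]
    (B : LinearMap.BilinForm (ZMod 2) V) (hB : ∀ v, B v v = 0) (α x : V) :
    transvection B hB α x = x + B x α • α := rfl

lemma trans_mul {V : Type} [AddCommGroup V] [Module (ZMod 2) V]
    (B : LinearMap.BilinForm (ZMod 2) V) (hB : ∀ v, B v v = 0) (a b : V)
    (hab : B a b = 1) (hba : B b a = 1) :
    transvection B hB a * transvection B hB b * transvection B hB a
      = transvection B hB (a + b) := by
  apply LinearEquiv.toLinearMap_injective
  apply LinearMap.ext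
  intro x
  show transvection B hB a (transvection B hB b (transvection B hB a x))
      = transvection B hB (a + b) x
  simp only [transvection_apply]
  simp only [map_add, LinearMap.add_apply, LinearMap.smul_apply, map_smul, smul_eq_mul,
    hB, hab, hba, mul_zero, mul_one, add_zero, zero_add, smul_add]
  have h2 : (2 : ZMod 2) = 0 := rfl
  match_scalars <;> first | ring1 | linear_combination (B x a) * h2

lemma Bx (n : ℕ) (B : LinearMap.BilinForm (ZMod 2) (Fin n → ZMod 2))
    (hBval : ∀ i j : Fin n, B (Pi.single i 1) (Pi.single j 1) =
      if (i : ℕ) + 1 = (j : ℕ) ∨ (j : ℕ) + 1 = (i : ℕ) then 1 else 0)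
    (x : Fin n → ZMod 2) (i : Fin n) :
    B x (Pi.single i 1) =
      ∑ k : Fin n, if (k : ℕ) + 1 = (i : ℕ) ∨ (i : ℕ) + 1 = (k : ℕ) then x k else 0 := by
  have hx : x = ∑ k, x k • Pi.single k (1 : ZMod 2) := by
    conv_lhs => rw [← Finset.univ_sum_single x]
    congr 1; funext k; rw [← Pi.single_smul, smul_eq_mul, mul_one]
  conv_lhs => rw [hx]
  rw [map_sum, LinearMap.sum_apply]
  refine Finset.sum_congr rfl fun k _ => ?_
  rw [map_smul, LinearMap.smul_apply, smul_eq_mul, hBval]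
  split <;> simp

lemma Phi_swap (n : ℕ) (hn : 0 < n) (B : LinearMap.BilinForm (ZMod 2) (Fin n → ZMod 2))
    (hB : ∀ v, B v v = 0)
    (hBval : ∀ i j : Fin n, B (Pi.single i 1) (Pi.single j 1) =
      if (i : ℕ) + 1 = (j : ℕ) ∨ (j : ℕ) + 1 = (i : ℕ) then 1 else 0)
    (i : Fin n) :
    Phi n hn (Equiv.swap i.castSucc i.succ) = transvection B hB (Pi.single i 1) := by
  set σ := Equiv.swap i.castSucc i.succ with hσ
  apply LinearEquiv.toLinearMap_injective
  apply LinearMap.ext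
  intro x
  funext l
  show Emap n (Mmap n σ (Dmap n x)) l = transvection B hB (Pi.single i 1) x l
  have hσinv : σ⁻¹ = σ := Equiv.swap_inv _ _
  rw [Emap_apply]
  have step : ∀ j : Fin (n+1), (if j ≤ l.castSucc then Mmap n σ (Dmap n x) j else 0)
      = ∑ k : Fin n, if σ j ∈ ({k.castSucc, k.succ} : Finset (Fin (n+1))) then
          (if j ≤ l.castSucc then x k else 0) else 0 := by
    intro j
    rw [Mmap_apply, hσinv, Dmap_apply]
    split
    · exact Finset.sum_congr rfl fun k _ => by
        simp only [Finset.mem_insert, Finset.mem_singleton]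
    · simp
  simp only [step]
  rw [Finset.sum_comm]
  have reindex : ∀ k : Fin n,
      (∑ j : Fin (n+1), if σ j ∈ ({k.castSucc, k.succ} : Finset (Fin (n+1))) then
          (if j ≤ l.castSucc then x k else 0) else 0)
      = (if σ k.castSucc ≤ l.castSucc then x k else 0)
        + (if σ k.succ ≤ l.castSucc then x k else 0) := by
    intro k
    have e1 : ∀ j : Fin (n+1), (if σ j ∈ ({k.castSucc, k.succ} : Finset (Fin (n+1))) then
          (if j ≤ l.castSucc then x k else 0) else 0)
        = (fun m => if m ∈ ({k.castSucc, k.succ} : Finset (Fin (n+1))) then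
          (if σ m ≤ l.castSucc then x k else 0) else 0) (σ j) := by
      intro j
      show _ = if σ j ∈ ({k.castSucc, k.succ} : Finset (Fin (n+1))) then
          (if σ (σ j) ≤ l.castSucc then x k else 0) else 0
      rw [hσ, Equiv.swap_apply_self]
    rw [Finset.sum_congr rfl fun j _ => e1 j]
    rw [Equiv.sum_comp σ (fun m => if m ∈ ({k.castSucc, k.succ} : Finset (Fin (n+1))) then
        (if σ m ≤ l.castSucc then x k else 0) else 0)]
    rw [Finset.sum_ite_mem, Finset.univ_inter, Finset.sum_pair (by simp [Fin.ext_iff])]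
  simp only [reindex]
  have rhs : transvection B hB (Pi.single i 1) x l
      = ∑ k : Fin n, ((if k = l then x k else 0)
          + (if l = i ∧ ((k : ℕ) + 1 = (i : ℕ) ∨ (i : ℕ) + 1 = (k : ℕ)) then x k else 0)) := by
    rw [transvection_apply]
    simp only [Pi.add_apply, Pi.smul_apply, smul_eq_mul]
    rw [Finset.sum_add_distrib]
    congr 1
    · rw [Finset.sum_ite_eq' Finset.univ, if_pos (Finset.mem_univ _)]
    · rw [Pi.single_apply, Bx n B hBval]
      by_cases hli : l = i
      · simp [hli]
      · simp [hli]
  rw [rhs]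
  refine Finset.sum_congr rfl fun k _ => ?_
  have hk := k.isLt; have hl := l.isLt; have hi := i.isLt
  rw [hσ, Equiv.swap_apply_def, Equiv.swap_apply_def]
  simp only [Fin.le_def, Fin.ext_iff, Fin.coe_castSucc, Fin.val_succ, apply_ite (Fin.val)]
  split_ifs <;> first | omega | simp [CharTwo.add_self_eq_zero] | omega

end Stmt7Aux

lemma connected_of_hub {α : Type} (G : SimpleGraph α) (x : α)
    (h : ∀ v, v = x ∨ G.Adj x v) : G.Connected := by
  rw [SimpleGraph.connected_iff]
  refine ⟨fun u v => ?_, ⟨x⟩⟩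
  have ru : G.Reachable x u := by
    rcases h u with rfl | hu
    · exact SimpleGraph.Reachable.refl _
    · exact hu.reachable
  have rv : G.Reachable x v := by
    rcases h v with rfl | hv
    · exact SimpleGraph.Reachable.refl _
    · exact hv.reachable
  exact ru.symm.trans rv

lemma numComponents_of_connected {α : Type} (G : SimpleGraph α) (h : G.Connected) :
    numComponents G = 1 := by
  have hs := h.preconnected.subsingleton_connectedComponent
  have hne : Nonempty G.ConnectedComponent := ⟨G.connectedComponentMk h.nonempty.some⟩
  exact Nat.card_unique

lemma not_cut_of_conn {α : Type} (G : SimpleGraph α) (u : α) (h1 : G.Connected)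
    (h2 : (G.induce {v | v ≠ u}).Connected) : ¬ IsCutVertex G u := by
  unfold IsCutVertex
  rw [numComponents_of_connected _ h1, numComponents_of_connected _ h2]
  omega



/-- counterexample: for `n ≥ 3`, `V = 𝔽₂ⁿ`, `B` the symplectic form with
`B(αᵢ,αⱼ) = 1` iff `|i - j| = 1` on the standard basis, and `S` the standard basis together
with `α₁ + α₂`: `S` spans `V`, `Tv(S)` is isomorphic to a symmetric group, yet `G(S)` is
not a block graph. -/
theorem stmt7 (n : ℕ) (hn : 3 ≤ n)
    (B : LinearMap.BilinForm (ZMod 2) (Fin n → ZMod 2)) (hB : ∀ v, B v v = 0)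
    (hBval : ∀ i j : Fin n, B (Pi.single i 1) (Pi.single j 1) =
      if (i : ℕ) + 1 = (j : ℕ) ∨ (j : ℕ) + 1 = (i : ℕ) then 1 else 0)
    (S : Set (Fin n → ZMod 2))
    (hS : S = (Set.range fun i : Fin n => Pi.single i (1 : ZMod 2)) ∪
      {Pi.single (⟨0, by omega⟩ : Fin n) 1 + Pi.single (⟨1, by omega⟩ : Fin n) 1}) :
    Submodule.span (ZMod 2) S = ⊤ ∧
      (∃ m : ℕ, Nonempty (Tv B hB S ≃* Equiv.Perm (Fin m))) ∧
      ¬ IsBlockGraph (graphOf B hB S) := by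
  subst hS
  have hn0 : 0 < n := by omega
  set i0 : Fin n := ⟨0, by omega⟩ with hi0
  set i1 : Fin n := ⟨1, by omega⟩ with hi1
  set i2 : Fin n := ⟨2, by omega⟩ with hi2
  set S : Set (Fin n → ZMod 2) :=
    (Set.range fun i : Fin n => Pi.single i (1 : ZMod 2)) ∪
      {Pi.single i0 1 + Pi.single i1 1} with hSdef
  set α0 : Fin n → ZMod 2 := Pi.single i0 1 with hα0
  set α1 : Fin n → ZMod 2 := Pi.single i1 1 with hα1
  set α2 : Fin n → ZMod 2 := Pi.single i2 1 with hα2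
  set γ : Fin n → ZMod 2 := α0 + α1 with hγ
  -- index distinctness
  have hi01 : i0 ≠ i1 := by simp [hi0, hi1, Fin.ext_iff]
  have hi02 : i0 ≠ i2 := by simp [hi0, hi2, Fin.ext_iff]
  have hi12 : i1 ≠ i2 := by simp [hi1, hi2, Fin.ext_iff]
  -- bilinear form values
  have hB00 : B α0 α0 = 0 := hB _
  have hB11 : B α1 α1 = 0 := hB _
  have hB01 : B α0 α1 = 1 := by rw [hα0, hα1, hBval]; simp [hi0, hi1]
  have hB10 : B α1 α0 = 1 := by rw [hα0, hα1, hBval]; simp [hi0, hi1]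
  have hB12 : B α1 α2 = 1 := by rw [hα1, hα2, hBval]; simp [hi1, hi2]
  have hB02 : B α0 α2 = 0 := by rw [hα0, hα2, hBval]; simp [hi0, hi2]
  have hBγ0 : B γ α0 = 1 := by
    rw [hγ, map_add, LinearMap.add_apply, hB00, hB10, zero_add]
  have hBγ2 : B γ α2 = 1 := by
    rw [hγ, map_add, LinearMap.add_apply, hB02, hB12, zero_add]
  have hB1γ : B α1 γ = 1 := by
    rw [hγ, map_add, hB10, hB11, add_zero]
  -- distinctness of vectors
  have hd01 : α0 ≠ α1 := by
    intro h
    have := congrFun h i0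
    rw [hα0, hα1, Pi.single_eq_same, Pi.single_eq_of_ne hi01] at this
    exact one_ne_zero this
  have hd02 : α0 ≠ α2 := by
    intro h
    have := congrFun h i0
    rw [hα0, hα2, Pi.single_eq_same, Pi.single_eq_of_ne hi02] at this
    exact one_ne_zero this
  have hd12 : α1 ≠ α2 := by
    intro h
    have := congrFun h i1
    rw [hα1, hα2, Pi.single_eq_same, Pi.single_eq_of_ne hi12] at this
    exact one_ne_zero this
  have hγ1 : γ i1 = 1 := by
    rw [hγ, Pi.add_apply, hα0, hα1, Pi.single_eq_same, Pi.single_eq_of_ne hi01.symm, zero_add]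
  have hγ0 : γ i0 = 1 := by
    rw [hγ, Pi.add_apply, hα0, hα1, Pi.single_eq_same, Pi.single_eq_of_ne hi01, add_zero]
  have hdγ0 : γ ≠ α0 := by
    intro h
    have := congrFun h i1
    rw [hγ1, hα0, Pi.single_eq_of_ne hi01.symm] at this
    exact one_ne_zero this
  have hdγ1 : γ ≠ α1 := by
    intro h
    have := congrFun h i0
    rw [hγ0, hα1, Pi.single_eq_of_ne hi01] at this
    exact one_ne_zero this
  have hdγ2 : γ ≠ α2 := by
    intro h
    have := congrFun h i0
    rw [hγ0, hα2, Pi.single_eq_of_ne hi02] at this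
    exact one_ne_zero this
  -- memberships
  have mα : ∀ i : Fin n, Pi.single i (1 : ZMod 2) ∈ S := fun i => Or.inl ⟨i, rfl⟩
  have mγ : γ ∈ S := Or.inr rfl
  refine ⟨?_, ?_, ?_⟩
  · -- span
    rw [eq_top_iff]
    rintro x -
    have hx : x = ∑ k, x k • Pi.single k (1 : ZMod 2) := by
      conv_lhs => rw [← Finset.univ_sum_single x]
      congr 1; funext k; rw [← Pi.single_smul, smul_eq_mul, mul_one]
    rw [hx]
    exact Submodule.sum_mem _ fun k _ =>
      Submodule.smul_mem _ _ (Submodule.subset_span (mα k))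
  · -- symmetric group
    refine ⟨n + 1, ?_⟩
    have htop : Subgroup.closure
        (Set.range fun i : Fin n => Equiv.swap i.castSucc i.succ) = ⊤ :=
      Subgroup.closure_eq_top_of_mclosure_eq_top (Equiv.Perm.mclosure_swap_castSucc_succ n)
    have gen1 : ∀ i : Fin n, transvection B hB (Pi.single i 1) ∈
        (Stmt7Aux.Phi n hn0).range :=
      fun i => ⟨_, Stmt7Aux.Phi_swap n hn0 B hB hBval i⟩
    have gen2 : transvection B hB γ ∈ (Stmt7Aux.Phi n hn0).range := by
      refine ⟨Equiv.swap i0.castSucc i0.succ * Equiv.swap i1.castSucc i1.succ *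
        Equiv.swap i0.castSucc i0.succ, ?_⟩
      rw [map_mul, map_mul, Stmt7Aux.Phi_swap n hn0 B hB hBval,
        Stmt7Aux.Phi_swap n hn0 B hB hBval]
      exact Stmt7Aux.trans_mul B hB α0 α1 hB01 hB10
    have hrange : (Stmt7Aux.Phi n hn0).range = Tv B hB S := by
      apply le_antisymm
      · rw [MonoidHom.range_eq_map, ← htop, MonoidHom.map_closure]
        rw [Subgroup.closure_le]
        rintro g ⟨w, ⟨i, rfl⟩, rfl⟩
        rw [Stmt7Aux.Phi_swap n hn0 B hB hBval i]
        exact Subgroup.subset_closure ⟨Pi.single i 1, mα i, rfl⟩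
      · rw [Tv, Subgroup.closure_le]
        rintro g ⟨v, hv, rfl⟩
        rcases hv with ⟨i, rfl⟩ | hv
        · exact gen1 i
        · rw [Set.mem_singleton_iff] at hv
          subst hv
          exact gen2
    exact ⟨(MulEquiv.subgroupCongr hrange).symm.trans
      (MonoidHom.ofInjective (Stmt7Aux.Phi_injective n hn hn0)).symm⟩
  · -- not a block graph
    set G := graphOf B hB S with hG
    set a0 : ↑S := ⟨α0, mα i0⟩ with ha0
    set a1 : ↑S := ⟨α1, mα i1⟩ with ha1
    set a2 : ↑S := ⟨α2, mα i2⟩ with ha2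
    set g0 : ↑S := ⟨γ, mγ⟩ with hg0
    set A₀ : Set ↑S := {g0, a0, a1, a2} with hA₀
    -- the vertices of A₀, by value
    have hval : ∀ v : ↑S, v ∈ A₀ → (v : Fin n → ZMod 2) = γ ∨
        (v : Fin n → ZMod 2) = α0 ∨ (v : Fin n → ZMod 2) = α1 ∨
        (v : Fin n → ZMod 2) = α2 := by
      rintro v (rfl | rfl | rfl | rfl)
      · exact Or.inl rfl
      · exact Or.inr (Or.inl rfl)
      · exact Or.inr (Or.inr (Or.inl rfl))
      · exact Or.inr (Or.inr (Or.inr rfl))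
    -- adjacency of a1 to everything else in A₀, and of g0 to α0, α2
    have adj1 : ∀ v : ↑S, (v : Fin n → ZMod 2) = γ ∨ (v : Fin n → ZMod 2) = α0 ∨
        (v : Fin n → ZMod 2) = α2 → G.Adj a1 v := by
      intro v hv
      show B α1 (v : Fin n → ZMod 2) = 1
      rcases hv with h | h | h <;> rw [h]
      · exact hB1γ
      · exact hB10
      · exact hB12
    have adjγ : ∀ v : ↑S, (v : Fin n → ZMod 2) = α0 ∨ (v : Fin n → ZMod 2) = α2 →
        G.Adj g0 v := by
      intro v hv
      show B γ (v : Fin n → ZMod 2) = 1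
      rcases hv with h | h <;> rw [h]
      · exact hBγ0
      · exact hBγ2
    have hm1 : a1 ∈ A₀ := by simp [hA₀]
    have hmg : g0 ∈ A₀ := by simp [hA₀]
    have hconn : (G.induce A₀).Connected := by
      apply connected_of_hub _ (⟨a1, hm1⟩ : ↑A₀)
      rintro ⟨⟨vv, hvS⟩, hvA⟩
      rcases hval _ hvA with h' | h' | h' | h'
      · right; exact adj1 _ (Or.inl h')
      · right; exact adj1 _ (Or.inr (Or.inl h'))
      · left; exact Subtype.ext (Subtype.ext h')
      · right; exact adj1 _ (Or.inr (Or.inr h'))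
    have PA₀ : (G.induce A₀).Connected ∧ ∀ u, ¬ IsCutVertex (G.induce A₀) u := by
      refine ⟨hconn, fun u => ?_⟩
      apply not_cut_of_conn _ u hconn
      rcases hval u.1 u.2 with h | h | h | h
      · -- u = γ, hub a1
        have hne : (⟨a1, hm1⟩ : ↑A₀) ≠ u := by
          intro he; rw [← he] at h; exact hdγ1 h.symm
        apply connected_of_hub _ (⟨⟨a1, hm1⟩, hne⟩ : {v : ↑A₀ // v ≠ u})
        rintro ⟨⟨⟨vv, hvS⟩, hvA⟩, hvne⟩
        rcases hval _ hvA with h' | h' | h' | h'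
        · exact absurd (Subtype.ext (Subtype.ext (h'.trans h.symm))) hvne
        · right; exact adj1 _ (Or.inr (Or.inl h'))
        · left; exact Subtype.ext (Subtype.ext (Subtype.ext h'))
        · right; exact adj1 _ (Or.inr (Or.inr h'))
      · -- u = α0, hub a1
        have hne : (⟨a1, hm1⟩ : ↑A₀) ≠ u := by
          intro he; rw [← he] at h; exact hd01 h.symm
        apply connected_of_hub _ (⟨⟨a1, hm1⟩, hne⟩ : {v : ↑A₀ // v ≠ u})
        rintro ⟨⟨⟨vv, hvS⟩, hvA⟩, hvne⟩
        rcases hval _ hvA with h' | h' | h' | h'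
        · right; exact adj1 _ (Or.inl h')
        · exact absurd (Subtype.ext (Subtype.ext (h'.trans h.symm))) hvne
        · left; exact Subtype.ext (Subtype.ext (Subtype.ext h'))
        · right; exact adj1 _ (Or.inr (Or.inr h'))
      · -- u = α1, hub g0
        have hne : (⟨g0, hmg⟩ : ↑A₀) ≠ u := by
          intro he; rw [← he] at h; exact hdγ1 h
        apply connected_of_hub _ (⟨⟨g0, hmg⟩, hne⟩ : {v : ↑A₀ // v ≠ u})
        rintro ⟨⟨⟨vv, hvS⟩, hvA⟩, hvne⟩
        rcases hval _ hvA with h' | h' | h' | h'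
        · left; exact Subtype.ext (Subtype.ext (Subtype.ext h'))
        · right; exact adjγ _ (Or.inl h')
        · exact absurd (Subtype.ext (Subtype.ext (h'.trans h.symm))) hvne
        · right; exact adjγ _ (Or.inr h')
      · -- u = α2, hub a1
        have hne : (⟨a1, hm1⟩ : ↑A₀) ≠ u := by
          intro he; rw [← he] at h; exact hd12 h
        apply connected_of_hub _ (⟨⟨a1, hm1⟩, hne⟩ : {v : ↑A₀ // v ≠ u})
        rintro ⟨⟨⟨vv, hvS⟩, hvA⟩, hvne⟩
        rcases hval _ hvA with h' | h' | h' | h'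
        · right; exact adj1 _ (Or.inl h')
        · right; exact adj1 _ (Or.inr (Or.inl h'))
        · left; exact Subtype.ext (Subtype.ext (Subtype.ext h'))
        · exact absurd (Subtype.ext (Subtype.ext (h'.trans h.symm))) hvne
    -- get a maximal superset of A₀ with the property
    have hfin : ({A : Set ↑S | A₀ ⊆ A ∧ (G.induce A).Connected ∧
        ∀ u, ¬ IsCutVertex (G.induce A) u}).Finite := Set.toFinite _
    obtain ⟨A, hAF, hmax⟩ := hfin.exists_maximalFor id _
      ⟨A₀, subset_refl _, PA₀⟩
    rintro ⟨-, hblocks⟩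
    have hblock : IsBlock G A := by
      refine ⟨hAF.2, fun A' hAA' hPA' => ?_⟩
      exact le_antisymm (hmax ⟨hAF.1.trans hAA', hPA'⟩ hAA') hAA'
    have hpw := hblocks A hblock
    have hadj : G.Adj a0 a2 := hpw (hAF.1 (by simp [hA₀])) (hAF.1 (by simp [hA₀]))
      (fun h => hd02 (congrArg Subtype.val h))
    have : B α0 α2 = 1 := hadj
    rw [hB02] at this
    exact zero_ne_one this
end

section
/- Let V be a vector space over 𝔽₂ of finite positive dimension endowed with a symplectic form B whose radical is zero. Let I be a basis of V such that the graph G(I) is connected. Then for any k ≥ 2 mutually distinct vectors β₁,…,β_k ∈ V \ I, the graph G(I ∪ {β₁,…,β_k}) is not isomorphic to the line graph of a tree. -/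
open Module

section Statement8Aux

open Finset

open scoped Classical in
noncomputable def adjMap {α : Type} [Fintype α] (G : SimpleGraph α) :
    (α → ZMod 2) →ₗ[ZMod 2] (α → ZMod 2) where
  toFun x v := ∑ w, if G.Adj v w then x w else 0
  map_add' x y := by
    funext v
    simp only [Pi.add_apply, ← Finset.sum_add_distrib]
    refine Finset.sum_congr rfl fun w _ => ?_
    split <;> simp
  map_smul' c x := by
    funext v
    simp only [Pi.smul_apply, smul_eq_mul, RingHom.id_apply, Finset.mul_sum]
    refine Finset.sum_congr rfl fun w _ => ?_
    split <;> simp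

open scoped Classical in
lemma adjMap_apply {α : Type} [Fintype α] (G : SimpleGraph α) (x : α → ZMod 2) (v : α) :
    adjMap G x v = ∑ w, if G.Adj v w then x w else 0 := rfl

lemma adjMap_comp_iso {α β : Type} [Fintype α] [Fintype β] {G : SimpleGraph α}
    {H : SimpleGraph β} (e : G ≃g H) (x : β → ZMod 2) :
    adjMap G (x ∘ e) = (adjMap H x) ∘ e := by
  classical
  funext v
  rw [Function.comp_apply, adjMap_apply, adjMap_apply]
  refine Fintype.sum_equiv e.toEquiv _ _ fun w => ?_
  exact if_congr (e.map_adj_iff).symm rfl rfl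

lemma finrank_ker_adjMap_eq {α β : Type} [Fintype α] [Fintype β] {G : SimpleGraph α}
    {H : SimpleGraph β} (e : G ≃g H) :
    Module.finrank (ZMod 2) (LinearMap.ker (adjMap G)) =
      Module.finrank (ZMod 2) (LinearMap.ker (adjMap H)) := by
  let P : (β → ZMod 2) ≃ₗ[ZMod 2] (α → ZMod 2) :=
    LinearEquiv.funCongrLeft (ZMod 2) (ZMod 2) e.toEquiv
  have hP : ∀ y : β → ZMod 2, (P y : α → ZMod 2) = y ∘ e := fun y => rfl
  have hmap : (LinearMap.ker (adjMap H)).map (P : (β → ZMod 2) →ₗ[ZMod 2] (α → ZMod 2)) =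
      LinearMap.ker (adjMap G) := by
    ext x
    simp only [Submodule.mem_map, LinearMap.mem_ker, LinearEquiv.coe_coe]
    constructor
    · rintro ⟨y, hy, rfl⟩
      show adjMap G (P y) = 0
      rw [hP, adjMap_comp_iso e, hy]
      rfl
    · intro hx
      refine ⟨x ∘ e.symm, ?_, ?_⟩
      · have h := adjMap_comp_iso e.symm x
        rw [hx] at h
        exact h.trans rfl
      · show P (x ∘ e.symm) = x
        rw [hP]
        funext v
        simp only [Function.comp_apply]
        congr 1
        exact e.toEquiv.symm_apply_apply v
  exact (LinearEquiv.finrank_eq (P.ofSubmodules _ _ hmap)).symm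

open scoped Classical in
noncomputable def yMap {W : Type} (T : SimpleGraph W) [Fintype T.edgeSet] :
    (T.edgeSet → ZMod 2) →ₗ[ZMod 2] (W → ZMod 2) where
  toFun x u := ∑ f : T.edgeSet, if u ∈ (f : Sym2 W) then x f else 0
  map_add' x y := by
    funext u
    simp only [Pi.add_apply, ← Finset.sum_add_distrib]
    refine Finset.sum_congr rfl fun w _ => ?_
    split <;> simp
  map_smul' c x := by
    funext u
    simp only [Pi.smul_apply, smul_eq_mul, RingHom.id_apply, Finset.mul_sum]
    refine Finset.sum_congr rfl fun w _ => ?_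
    split <;> simp

open scoped Classical in
lemma yMap_apply {W : Type} (T : SimpleGraph W) [Fintype T.edgeSet]
    (x : T.edgeSet → ZMod 2) (u : W) :
    yMap T x u = ∑ f : T.edgeSet, if u ∈ (f : Sym2 W) then x f else 0 := rfl

lemma sym2_rep {W : Type} (f : Sym2 W) : ∃ a b, f = s(a, b) := by
  induction f using Sym2.ind with
  | _ a b => exact ⟨a, b, rfl⟩

lemma sym2_eq_of_mem {W : Type} {u v : W} (huv : u ≠ v) {f : Sym2 W}
    (hu : u ∈ f) (hv : v ∈ f) : f = s(u, v) := by
  obtain ⟨p, q, rfl⟩ := sym2_rep f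
  rw [Sym2.mem_iff] at hu hv
  rcases hu with rfl | rfl <;> rcases hv with rfl | rfl
  · exact absurd rfl huv
  · rfl
  · exact Sym2.eq_swap
  · exact absurd rfl huv

/-- In an acyclic graph, the edges are linearly independent over `𝔽₂`. -/
lemma edge_indep {W : Type} (T : SimpleGraph W) [Fintype T.edgeSet] (hT : T.IsAcyclic)
    (x : T.edgeSet → ZMod 2) (hy : ∀ u, yMap T x u = 0) : x = 0 := by
  classical
  by_contra hx
  obtain ⟨f₀, hf₀⟩ : ∃ f, x f ≠ 0 := by
    by_contra h
    push_neg at h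
    exact hx (funext fun f => h f)
  have hx₀ : x f₀ = 1 := by
    have h2 : ∀ c : ZMod 2, c ≠ 0 → c = 1 := by decide
    exact h2 _ hf₀
  obtain ⟨a, b, hab⟩ := sym2_rep (f₀ : Sym2 W)
  have hadj : T.Adj a b := by
    have h := f₀.2
    rw [hab] at h
    exact h
  have hbridge : ¬(T \ SimpleGraph.fromEdgeSet {s(a, b)}).Reachable a b :=
    (SimpleGraph.isBridge_iff.mp ((SimpleGraph.isAcyclic_iff_forall_adj_isBridge.mp hT) hadj))
  set G' := T \ SimpleGraph.fromEdgeSet {s(a, b)} with hG'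
  set Z : Set W := {w | G'.Reachable a w} with hZdef
  set z : W → ZMod 2 := fun u => if u ∈ Z then 1 else 0 with hz
  let P : Sym2 W → Finset W :=
    Sym2.lift ⟨fun a b => ({a, b} : Finset W), fun a b => Finset.pair_comm a b⟩
  have hP : ∀ a b : W, P s(a, b) = {a, b} := fun a b => rfl
  set A : Finset W := Finset.univ.biUnion (fun f : T.edgeSet => P (f : Sym2 W)) with hA
  have hmemA : ∀ (f : T.edgeSet) (w : W), w ∈ (f : Sym2 W) → w ∈ A := by
    intro f w hw
    refine Finset.mem_biUnion.mpr ⟨f, Finset.mem_univ f, ?_⟩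
    obtain ⟨p, q, hpq⟩ := sym2_rep (f : Sym2 W)
    rw [hpq] at hw ⊢
    rw [hP]
    rw [Sym2.mem_iff] at hw
    simpa using hw
  have hw_eval : ∀ (f : T.edgeSet) (p q : W), (f : Sym2 W) = s(p, q) →
      (∑ u ∈ A, if u ∈ (f : Sym2 W) then z u else 0) = z p + z q := by
    intro f p q hpq
    have hpq' : p ≠ q := by
      have h := f.2
      rw [hpq] at h
      exact ((SimpleGraph.mem_edgeSet T).mp h).ne
    have hpA : p ∈ A := hmemA f p (by rw [hpq]; exact Sym2.mem_mk_left p q)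
    have hqA : q ∈ A := hmemA f q (by rw [hpq]; exact Sym2.mem_mk_right p q)
    rw [hpq]
    have hcong : ∀ u ∈ A, (if u ∈ s(p, q) then z u else 0)
        = if u = p ∨ u = q then z u else 0 :=
      fun u _ => if_congr Sym2.mem_iff rfl rfl
    rw [Finset.sum_congr rfl hcong, ← Finset.sum_filter]
    have hfilt : A.filter (fun u => u = p ∨ u = q) = {p, q} := by
      ext u
      simp only [Finset.mem_filter, Finset.mem_insert, Finset.mem_singleton]
      constructor
      · rintro ⟨_, h⟩; exact h
      · rintro (rfl | rfl)
        exacts [⟨hpA, Or.inl rfl⟩, ⟨hqA, Or.inr rfl⟩]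
    rw [hfilt, Finset.sum_pair hpq']
  -- The total sum, computed in two ways.
  have hzero : (∑ f : T.edgeSet, (∑ u ∈ A, if u ∈ (f : Sym2 W) then z u else 0) * x f) = 0 := by
    have step1 : ∀ f : T.edgeSet,
        (∑ u ∈ A, if u ∈ (f : Sym2 W) then z u else 0) * x f
          = ∑ u ∈ A, if u ∈ (f : Sym2 W) then z u * x f else 0 := by
      intro f
      rw [Finset.sum_mul]
      exact Finset.sum_congr rfl fun u _ => by rw [ite_mul, zero_mul]
    rw [Finset.sum_congr rfl fun f _ => step1 f, Finset.sum_comm]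
    refine Finset.sum_eq_zero fun u _ => ?_
    have step2 : (∑ f : T.edgeSet, if u ∈ (f : Sym2 W) then z u * x f else 0)
        = z u * ∑ f : T.edgeSet, if u ∈ (f : Sym2 W) then x f else 0 := by
      rw [Finset.mul_sum]
      exact Finset.sum_congr rfl fun f _ => by rw [mul_ite, mul_zero]
    rw [step2, ← yMap_apply, hy u, mul_zero]
  have hone : (∑ f : T.edgeSet, (∑ u ∈ A, if u ∈ (f : Sym2 W) then z u else 0) * x f) = 1 := by
    rw [Finset.sum_eq_single f₀]
    · rw [hw_eval f₀ a b hab, hx₀, mul_one]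
      have hza : z a = 1 := by
        rw [hz]
        simp only [hZdef, Set.mem_setOf_eq]
        rw [if_pos (SimpleGraph.Reachable.refl a)]
      have hzb : z b = 0 := by
        rw [hz]
        simp only [hZdef, Set.mem_setOf_eq]
        rw [if_neg hbridge]
      rw [hza, hzb, add_zero]
    · intro f _ hf
      obtain ⟨p, q, hpq⟩ := sym2_rep (f : Sym2 W)
      rw [hw_eval f p q hpq]
      by_cases hxf : x f = 0
      · rw [hxf, mul_zero]
      · have hadjpq : T.Adj p q := by
          have h := f.2
          rw [hpq] at h
          exact h
        have hne : s(p, q) ≠ s(a, b) := by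
          intro h
          apply hf
          apply Subtype.ext
          rw [hpq, hab, h]
        have hadj' : G'.Adj p q := by
          rw [hG', SimpleGraph.sdiff_adj]
          refine ⟨hadjpq, ?_⟩
          rw [SimpleGraph.fromEdgeSet_adj]
          rintro ⟨h1, -⟩
          exact hne (Set.mem_singleton_iff.mp h1)
        have hiff : G'.Reachable a p ↔ G'.Reachable a q :=
          ⟨fun h => h.trans hadj'.reachable, fun h => h.trans hadj'.symm.reachable⟩
        have hzeq : z p = z q := by
          rw [hz]
          simp only [hZdef, Set.mem_setOf_eq]
          exact if_congr hiff rfl rfl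
        rw [hzeq, CharTwo.add_self_eq_zero, zero_mul]
    · intro h
      exact absurd (Finset.mem_univ f₀) h
  rw [hzero] at hone
  exact zero_ne_one hone

lemma yMap_adj {W : Type} (T : SimpleGraph W) [Fintype T.edgeSet]
    (x : T.edgeSet → ZMod 2) (hx : adjMap T.lineGraph x = 0)
    {u v : W} (huv : T.Adj u v) : yMap T x u = yMap T x v := by
  classical
  let e : T.edgeSet := ⟨s(u, v), huv⟩
  have hev : (e : Sym2 W) = s(u, v) := rfl
  have h0 : (∑ f : T.edgeSet, if (T.lineGraph).Adj e f then x f else 0) = 0 := by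
    have h := congrFun hx e
    rw [adjMap_apply] at h
    exact h
  have hsum : yMap T x u + yMap T x v
      = ∑ f : T.edgeSet, if (T.lineGraph).Adj e f then x f else 0 := by
    rw [yMap_apply, yMap_apply, ← Finset.sum_add_distrib]
    refine Finset.sum_congr rfl fun f _ => ?_
    by_cases hf : f = e
    · subst hf
      rw [hev]
      rw [if_pos (Sym2.mem_mk_left u v), if_pos (Sym2.mem_mk_right u v),
        if_neg (T.lineGraph.irrefl), CharTwo.add_self_eq_zero]
    · by_cases hu : u ∈ (f : Sym2 W) <;> by_cases hv : v ∈ (f : Sym2 W)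
      · exfalso
        apply hf
        apply Subtype.ext
        rw [sym2_eq_of_mem huv.ne hu hv, hev]
      · rw [if_pos hu, if_neg hv, add_zero, if_pos]
        refine SimpleGraph.lineGraph_adj_iff_exists.mpr ⟨fun h => hf h.symm, u, ?_, hu⟩
        rw [hev]
        exact Sym2.mem_mk_left u v
      · rw [if_neg hu, if_pos hv, zero_add, if_pos]
        refine SimpleGraph.lineGraph_adj_iff_exists.mpr ⟨fun h => hf h.symm, v, ?_, hv⟩
        rw [hev]
        exact Sym2.mem_mk_right u v
      · rw [if_neg hu, if_neg hv, add_zero, if_neg]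
        intro h
        obtain ⟨-, w, hwe, hwf⟩ := SimpleGraph.lineGraph_adj_iff_exists.mp h
        rw [hev] at hwe
        rcases Sym2.mem_iff.mp hwe with rfl | rfl
        exacts [hu hwf, hv hwf]
  have : yMap T x u + yMap T x v = 0 := hsum.trans h0
  have h2 : ∀ c d : ZMod 2, c + d = 0 → c = d := by decide
  exact h2 _ _ this

lemma yMap_const {W : Type} (T : SimpleGraph W) [Fintype T.edgeSet]
    (hpre : T.Preconnected) (x : T.edgeSet → ZMod 2) (hx : adjMap T.lineGraph x = 0)
    (u v : W) : yMap T x u = yMap T x v := by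
  obtain ⟨p⟩ := hpre u v
  induction p with
  | nil => rfl
  | cons h q ih => exact (yMap_adj T x hx h).trans ih

lemma nullity_lineGraph_le_one {W : Type} (T : SimpleGraph W) [Fintype T.edgeSet]
    (hT : T.IsTree) :
    Module.finrank (ZMod 2) (LinearMap.ker (adjMap T.lineGraph)) ≤ 1 := by
  obtain ⟨u₀⟩ := hT.isConnected.nonempty
  let L : (LinearMap.ker (adjMap T.lineGraph)) →ₗ[ZMod 2] ZMod 2 :=
    (LinearMap.proj u₀) ∘ₗ (yMap T) ∘ₗ (Submodule.subtype _)
  have hinj : Function.Injective L := by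
    rw [← LinearMap.ker_eq_bot, LinearMap.ker_eq_bot']
    intro x hLx
    have hker : adjMap T.lineGraph x.1 = 0 := x.2
    have hconst : ∀ u, yMap T x.1 u = 0 := fun u =>
      (yMap_const T hT.isConnected.preconnected x.1 hker u u₀).trans hLx
    exact Subtype.ext (edge_indep T hT.IsAcyclic x.1 hconst)
  calc Module.finrank (ZMod 2) (LinearMap.ker (adjMap T.lineGraph))
      ≤ Module.finrank (ZMod 2) (ZMod 2) :=
        LinearMap.finrank_le_finrank_of_injective hinj
    _ = 1 := Module.finrank_self (ZMod 2)

/-- The linear-combination map from the function space on `S` to `V`. -/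
noncomputable def combMap {V : Type} [AddCommGroup V] [Module (ZMod 2) V] (S : Set V)
    [Fintype S] : (S → ZMod 2) →ₗ[ZMod 2] V where
  toFun x := ∑ s : S, x s • (s : V)
  map_add' x y := by
    simp only [Pi.add_apply, add_smul, Finset.sum_add_distrib]
  map_smul' c x := by
    simp only [Pi.smul_apply, smul_eq_mul, RingHom.id_apply, Finset.smul_sum, smul_smul]

lemma ker_adjMap_graphOf {V : Type} [AddCommGroup V] [Module (ZMod 2) V]
    (B : LinearMap.BilinForm (ZMod 2) V) (hB : ∀ v, B v v = 0)
    (hrad : ∀ v : V, (∀ w, B v w = 0) → v = 0)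
    (S : Set V) [Fintype S] (hspan : Submodule.span (ZMod 2) S = ⊤) :
    LinearMap.ker (adjMap (graphOf B hB S)) = LinearMap.ker (combMap S) := by
  classical
  have key : ∀ (x : S → ZMod 2) (s : S), adjMap (graphOf B hB S) x s = B s (combMap S x) := by
    intro x s
    rw [adjMap_apply]
    have hexp : B (s : V) (combMap S x) = ∑ t : S, x t * B s t := by
      show B (s : V) (∑ t : S, x t • (t : V)) = _
      rw [map_sum]
      exact Finset.sum_congr rfl fun t _ => by rw [map_smul, smul_eq_mul]
    rw [hexp]
    refine Finset.sum_congr rfl fun t _ => ?_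
    have hadj : (graphOf B hB S).Adj s t ↔ B (s : V) (t : V) = 1 := Iff.rfl
    have hcases : B (s : V) (t : V) = 0 ∨ B (s : V) (t : V) = 1 := by
      have h01 : ∀ c : ZMod 2, c = 0 ∨ c = 1 := by decide
      exact h01 _
    rcases hcases with h | h
    · rw [if_neg, h, mul_zero]
      rw [hadj, h]
      exact zero_ne_one
    · rw [if_pos (hadj.mpr h), h, mul_one]
  ext x
  simp only [LinearMap.mem_ker]
  constructor
  · intro hx
    have hall : ∀ s : S, B (s : V) (combMap S x) = 0 := by
      intro s
      rw [← key x s, hx]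
      rfl
    refine hrad (combMap S x) ?_
    intro w
    have hsym : ∀ s : S, B (combMap S x) (s : V) = 0 := by
      intro s
      have h := hB ((s : V) + combMap S x)
      simp only [map_add, LinearMap.add_apply, hB] at h
      have h' : B (combMap S x) (s : V) + B (s : V) (combMap S x) = 0 := by
        simpa [hB] using h
      rw [hall s, add_zero] at h'
      exact h'
    have hle : Submodule.span (ZMod 2) S ≤ LinearMap.ker (B (combMap S x)) := by
      rw [Submodule.span_le]
      intro s hs
      exact LinearMap.mem_ker.mpr (hsym ⟨s, hs⟩)
    have hw : w ∈ Submodule.span (ZMod 2) S := by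
      rw [hspan]
      exact Submodule.mem_top
    exact hle hw
  · intro hx
    funext s
    rw [key x s, hx, map_zero]
    rfl

end Statement8Aux

/-- If the radical of `V` is zero, `I` is a basis of `V` with `G(I)` connected,
then for `k ≥ 2` mutually distinct vectors `β₁, …, β_k ∈ V \ I`, the graph
`G(I ∪ {β₁, …, β_k})` is not (isomorphic to) the line graph of a tree. -/
theorem stmt8 {V : Type} [AddCommGroup V] [Module (ZMod 2) V] [FiniteDimensional (ZMod 2) V]
    (hdim : 0 < Module.finrank (ZMod 2) V)
    (B : LinearMap.BilinForm (ZMod 2) V) (hB : ∀ v, B v v = 0)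
    (hrad : ∀ v : V, (∀ w, B v w = 0) → v = 0)
    (I : Set V) (hI : LinearIndependent (ZMod 2) ((↑) : I → V))
    (hIspan : Submodule.span (ZMod 2) I = ⊤)
    (hIconn : (graphOf B hB I).Connected)
    (k : ℕ) (hk : 2 ≤ k) (β : Fin k → V) (hinj : Function.Injective β)
    (hβ : ∀ i, β i ∉ I) :
    ¬ IsLineGraphOfTree (graphOf B hB (I ∪ Set.range β)) := by
  classical
  rintro ⟨W, T, hT, ⟨e⟩⟩
  have hIfin : I.Finite := hI.setFinite
  have hSfin : (I ∪ Set.range β).Finite := hIfin.union (Set.finite_range β)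
  haveI : Fintype ↥(I ∪ Set.range β) := hSfin.fintype
  haveI : Fintype ↥I := hIfin.fintype
  haveI : Fintype T.edgeSet := Fintype.ofEquiv _ e.toEquiv
  have hspan : Submodule.span (ZMod 2) (I ∪ Set.range β) = ⊤ := by
    rw [eq_top_iff, ← hIspan]
    exact Submodule.span_mono Set.subset_union_left
  have hker := ker_adjMap_graphOf B hB hrad (I ∪ Set.range β) hspan
  have hsurj : LinearMap.range (combMap (I ∪ Set.range β)) = ⊤ := by
    have h1 : Submodule.span (ZMod 2) (I ∪ Set.range β)
        ≤ LinearMap.range (combMap (I ∪ Set.range β)) := by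
      rw [Submodule.span_le]
      intro s hs
      refine LinearMap.mem_range.mpr ⟨Pi.single (⟨s, hs⟩ : ↥(I ∪ Set.range β)) 1, ?_⟩
      show (∑ t : ↥(I ∪ Set.range β),
        Pi.single (⟨s, hs⟩ : ↥(I ∪ Set.range β)) 1 t • (t : V)) = s
      rw [Finset.sum_eq_single (⟨s, hs⟩ : ↥(I ∪ Set.range β))]
      · rw [Pi.single_eq_same, one_smul]
      · intro t _ ht
        rw [Pi.single_eq_of_ne ht, zero_smul]
      · intro h
        exact absurd (Finset.mem_univ _) h
    rw [eq_top_iff, ← hspan]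
    exact h1
  have hrn := LinearMap.finrank_range_add_finrank_ker (combMap (I ∪ Set.range β))
  rw [hsurj, finrank_top] at hrn
  have hcardI : Fintype.card ↥I = Module.finrank (ZMod 2) V := by
    let b : Basis ↥I (ZMod 2) V := Basis.mk hI (by rw [Subtype.range_coe]; exact hIspan.ge)
    exact (Module.finrank_eq_card_basis b).symm
  have hdisj : Disjoint I (Set.range β) := by
    rw [Set.disjoint_right]
    rintro v ⟨i, rfl⟩
    exact hβ i
  have hcardS : Fintype.card ↥(I ∪ Set.range β) = Fintype.card ↥I + k := by
    rw [← Nat.card_eq_fintype_card, ← Nat.card_eq_fintype_card,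
      Nat.card_coe_set_eq, Nat.card_coe_set_eq,
      Set.ncard_union_eq hdisj hIfin (Set.finite_range β)]
    congr 1
    rw [← Nat.card_coe_set_eq, Nat.card_congr (Equiv.ofInjective β hinj).symm,
      Nat.card_eq_fintype_card, Fintype.card_fin]
  have hfun : Module.finrank (ZMod 2) (↥(I ∪ Set.range β) → ZMod 2)
      = Fintype.card ↥(I ∪ Set.range β) := Module.finrank_fintype_fun_eq_card _
  have hkerdim : Module.finrank (ZMod 2)
      (LinearMap.ker (adjMap (graphOf B hB (I ∪ Set.range β)))) = k := by
    rw [hker]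
    rw [hfun, hcardS, ← hcardI] at hrn
    omega
  have h1 := finrank_ker_adjMap_eq e
  have h2 := nullity_lineGraph_le_one T hT
  rw [hkerdim] at h1
  rw [← h1] at h2
  omega
end

section
/- Let V be a vector space over 𝔽₂ of finite positive dimension endowed with a symplectic form B. Let I be a basis of V, let T be a tree, and suppose G(I) is the line graph of T via an identification of I with the edge set of T (so that for distinct α, α' ∈ I, B(α,α') = 1 iff the edges α and α' share a vertex of T). Then the following are equivalent: (i) the radical of V is zero; (ii) the dimension of V is even; (iii) for some vertex u of T there exists β ∈ V such that for all α ∈ I, B(α,β) = 1 iff u is incident to the edge α in T; (iv) for each vertex u of T there exists a unique β ∈ V such that for all α ∈ I, B(α,β) = 1 iff u is incident to the edge α in T. -/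
open Module

lemma zmod2_cases : ∀ c : ZMod 2, c = 0 ∨ c = 1 := by decide

lemma zmod2_add_self : ∀ c : ZMod 2, c + c = 0 := by decide

lemma sym2_decomp {W : Type} (s : Sym2 W) : ∃ x y, s = s(x, y) := by
  induction s using Sym2.ind with | _ x y => exact ⟨x, y, rfl⟩

lemma sym2_mem_finite {W : Type} (s : Sym2 W) : {w | w ∈ s}.Finite := by
  obtain ⟨x, y, rfl⟩ := sym2_decomp s
  have : {w | w ∈ s(x, y)} = {x, y} := by
    ext w; simp [Sym2.mem_iff]
  rw [this]
  exact (Set.finite_singleton y).insert x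

lemma aux_mem_of_sum_zero {W : Type} [Fintype W] [DecidableEq W]
    (P : Submodule (ZMod 2) (W → ZMod 2))
    (hP : ∀ x y : W, (Pi.single x 1 + Pi.single y 1 : W → ZMod 2) ∈ P) :
    ∀ f : W → ZMod 2, (∑ u, f u = 0) → f ∈ P := by
  suffices H : ∀ n (f : W → ZMod 2), (∑ u, f u = 0) →
      (Finset.univ.filter (fun u => f u = 1)).card = n → f ∈ P by
    exact fun f hf => H _ f hf rfl
  intro n
  induction n using Nat.strong_induction_on with
  | _ n ih =>
    intro f hf hcard
    set s := Finset.univ.filter (fun u => f u = 1) with hs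
    have hfs : ∀ u, u ∉ s → f u = 0 := by
      intro u hu
      rcases zmod2_cases (f u) with h | h
      · exact h
      · exact absurd (Finset.mem_filter.mpr ⟨Finset.mem_univ u, h⟩) hu
    have hsum : (s.card : ZMod 2) = 0 := by
      have h1 : ∑ u, f u = ∑ u ∈ s, f u := by
        rw [← Finset.sum_subset (Finset.subset_univ s)]
        intro u _ hu; exact hfs u hu
      have h2 : ∑ u ∈ s, f u = ∑ u ∈ s, 1 := by
        apply Finset.sum_congr rfl
        intro u hu; exact (Finset.mem_filter.mp hu).2
      rw [h1, h2, Finset.sum_const, nsmul_eq_mul, mul_one] at hf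
      exact hf
    have heven : Even s.card := by
      rw [ZMod.natCast_eq_zero_iff] at hsum
      exact (even_iff_two_dvd).mpr hsum
    rcases Finset.eq_empty_or_nonempty s with hemp | ⟨x, hx⟩
    · have : f = 0 := by
        funext u
        exact hfs u (by rw [hemp]; exact Finset.notMem_empty u)
      rw [this]; exact P.zero_mem
    · have h2le : 1 < s.card := by
        rcases heven with ⟨k, hk⟩
        have : s.card ≠ 0 := Finset.card_ne_zero_of_mem hx
        omega
      obtain ⟨y, hy, hyx⟩ := Finset.exists_mem_ne h2le x
      set g : W → ZMod 2 := f + Pi.single x 1 + Pi.single y 1 with hg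
      have hfx : f x = 1 := (Finset.mem_filter.mp hx).2
      have hfy : f y = 1 := (Finset.mem_filter.mp hy).2
      have hgval : ∀ u, g u = if u = x ∨ u = y then 0 else f u := by
        intro u
        by_cases hux : u = x
        · subst hux
          rw [if_pos (Or.inl rfl)]
          simp only [hg, Pi.add_apply]
          rw [hfx, Pi.single_eq_same, Pi.single_eq_of_ne (Ne.symm hyx)]
          decide
        · by_cases huy : u = y
          · subst huy
            rw [if_pos (Or.inr rfl)]
            simp only [hg, Pi.add_apply]
            rw [hfy, Pi.single_eq_of_ne hux, Pi.single_eq_same]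
            decide
          · rw [if_neg (by tauto)]
            simp only [hg, Pi.add_apply]
            rw [Pi.single_eq_of_ne hux, Pi.single_eq_of_ne huy, add_zero, add_zero]
    -- continue
      have hsub : Finset.univ.filter (fun u => g u = 1) ⊆ (s.erase x).erase y := by
        intro u hu
        have hgu := (Finset.mem_filter.mp hu).2
        rw [hgval u] at hgu
        by_cases hor : u = x ∨ u = y
        · rw [if_pos hor] at hgu; exact absurd hgu (by decide)
        · rw [if_neg hor] at hgu
          push_neg at hor
          exact Finset.mem_erase.mpr ⟨hor.2, Finset.mem_erase.mpr ⟨hor.1,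
            Finset.mem_filter.mpr ⟨Finset.mem_univ u, hgu⟩⟩⟩
      have hlt : (Finset.univ.filter (fun u => g u = 1)).card < n := by
        have h1 := Finset.card_le_card hsub
        have h2 : ((s.erase x).erase y).card ≤ s.card - 2 := by
          have hyex : y ∈ s.erase x := Finset.mem_erase.mpr ⟨hyx, hy⟩
          have := Finset.card_erase_of_mem hyex
          have := Finset.card_erase_of_mem hx
          omega
        omega
      have hgsum : ∑ u, g u = 0 := by
        have : ∑ u, g u = (∑ u, f u) + (∑ u, (Pi.single x 1 : W → ZMod 2) u)
            + (∑ u, (Pi.single y 1 : W → ZMod 2) u) := by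
          simp [hg, Finset.sum_add_distrib]
        rw [this, hf, Finset.sum_pi_single', Finset.sum_pi_single'] <;>
          simp [zmod2_add_self]
      have hgP : g ∈ P := ih _ hlt g hgsum rfl
      have hfeq : f = g + (Pi.single x 1 + Pi.single y 1) := by
        funext u
        simp only [hg, Pi.add_apply]
        rcases zmod2_cases ((Pi.single x 1 : W → ZMod 2) u) with h | h <;>
          rcases zmod2_cases ((Pi.single y 1 : W → ZMod 2) u) with h' | h' <;>
          rw [h, h'] <;> ring_nf <;>
          rcases zmod2_cases (f u) with h'' | h'' <;> rw [h''] <;> decide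
      rw [hfeq]
      exact P.add_mem hgP (hP x y)

set_option maxHeartbeats 1000000 in
/-- with `I` a basis of `V` and `G(I)` the line graph of a tree `T` via an
identification `e` of `I` with the edges of `T`, the following are equivalent:
(i) the radical of `V` is zero; (ii) `dim V` is even; (iii) for some vertex `u` of `T` there
is `β ∈ V` with `B α β = 1` iff `u` is incident to `α`, for all `α ∈ I`; (iv) for each
vertex `u` of `T` there is a unique such `β`. -/
theorem stmt9 {V W : Type} [AddCommGroup V] [Module (ZMod 2) V] [FiniteDimensional (ZMod 2) V]
    (hdim : 0 < Module.finrank (ZMod 2) V)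
    (B : LinearMap.BilinForm (ZMod 2) V) (hB : ∀ v, B v v = 0)
    (I : Set V) (hI : LinearIndependent (ZMod 2) ((↑) : I → V))
    (hIspan : Submodule.span (ZMod 2) I = ⊤)
    (T : SimpleGraph W) (hT : T.IsTree)
    (e : I ≃ T.edgeSet)
    (he : ∀ a b : I, a ≠ b →
      ((B (a : V) (b : V) = 1) ↔ ∃ u : W, u ∈ (e a : Sym2 W) ∧ u ∈ (e b : Sym2 W))) :
    List.TFAE
      [∀ v : V, (∀ w, B v w = 0) → v = 0,
       Even (Module.finrank (ZMod 2) V),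
       ∃ (u : W) (β : V), ∀ α : I, (B (α : V) β = 1 ↔ u ∈ (e α : Sym2 W)),
       ∀ u : W, ∃! β : V, ∀ α : I, (B (α : V) β = 1 ↔ u ∈ (e α : Sym2 W))] := by
  classical
  -- finiteness of I
  have hIfin : I.Finite := hI.set_finite_of_isNoetherian
  haveI : Fintype I := hIfin.fintype
  -- the basis
  have hspan' : ⊤ ≤ Submodule.span (ZMod 2) (Set.range ((↑) : I → V)) := by
    rw [Subtype.range_coe]; exact le_of_eq hIspan.symm
  let b : Basis I (ZMod 2) V := Basis.mk hI hspan'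
  set n := Module.finrank (ZMod 2) V with hn
  have hcardI : Fintype.card I = n := (Module.finrank_eq_card_basis b).symm
  have hIne : Nonempty I := by
    rw [← Fintype.card_pos_iff, hcardI]; exact hdim
  -- decompose edges
  have hedgedec : ∀ i : I, ∃ x y : W, x ≠ y ∧ (e i : Sym2 W) = s(x, y) := by
    intro i
    obtain ⟨x, y, hxy⟩ := sym2_decomp (e i : Sym2 W)
    have hmem : (e i : Sym2 W) ∈ T.edgeSet := (e i).2
    rw [hxy] at hmem
    exact ⟨x, y, (T.mem_edgeSet.mp hmem).ne, hxy⟩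
  -- every vertex lies on an edge
  obtain ⟨i₀⟩ := hIne
  obtain ⟨x₀, y₀, hx₀y₀, hxy₀⟩ := hedgedec i₀
  have hedge : ∀ w : W, ∃ s ∈ T.edgeSet, w ∈ s := by
    intro w
    by_cases hwx : w = x₀
    · subst hwx
      refine ⟨(e i₀ : Sym2 W), (e i₀).2, ?_⟩
      rw [hxy₀]; exact Sym2.mem_mk_left _ _
    · obtain ⟨p⟩ := hT.isConnected.preconnected w x₀
      cases p with
      | nil => exact absurd rfl hwx
      | @cons _ v _ h q =>
        exact ⟨s(w, v), T.mem_edgeSet.mpr h, Sym2.mem_mk_left _ _⟩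
  haveI : Finite T.edgeSet := Finite.of_equiv I e
  haveI : Finite W := by
    rw [← Set.finite_univ_iff]
    refine Set.Finite.subset (Set.Finite.biUnion (Set.toFinite T.edgeSet)
      (fun s _ => sym2_mem_finite s)) ?_
    intro w _
    obtain ⟨s, hs, hws⟩ := hedge w
    exact Set.mem_biUnion hs hws
  haveI : Fintype W := Fintype.ofFinite W
  haveI : Fintype T.edgeSet := Fintype.ofFinite _
  have hcardW : Fintype.card W = n + 1 := by
    have h1 := hT.card_edgeFinset
    have h2 : T.edgeFinset.card = Fintype.card I := by
      rw [SimpleGraph.edgeFinset, Set.toFinset_card]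
      exact (Fintype.card_congr e).symm
    omega
  -- incidence vectors
  let ind : Sym2 W → (W → ZMod 2) := fun s w => if w ∈ s then 1 else 0
  let θ : V →ₗ[ZMod 2] (W → ZMod 2) := b.constr (ZMod 2) (fun i => ind (e i))
  have hθb : ∀ i : I, θ (i : V) = ind (e i) := by
    intro i
    have h := b.constr_basis (ZMod 2) (fun i => ind (e i)) i
    rwa [Basis.mk_apply] at h
  have hind : ∀ x y : W, x ≠ y →
      ind s(x, y) = Pi.single x 1 + Pi.single y 1 := by
    intro x y hxy
    funext w
    simp only [ind, Pi.add_apply]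
    by_cases hwx : w = x
    · subst hwx
      rw [if_pos (Sym2.mem_mk_left _ _), Pi.single_eq_same, Pi.single_eq_of_ne hxy, add_zero]
    · by_cases hwy : w = y
      · subst hwy
        rw [if_pos (Sym2.mem_mk_right _ _), Pi.single_eq_same, Pi.single_eq_of_ne hwx, zero_add]
      · rw [if_neg (by rw [Sym2.mem_iff]; tauto), Pi.single_eq_of_ne hwx,
          Pi.single_eq_of_ne hwy, add_zero]
  have hθi : ∀ i : I, ∃ x y : W, x ≠ y ∧ θ (i : V) = Pi.single x 1 + Pi.single y 1 := by
    intro i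
    obtain ⟨x, y, hxy, hdec⟩ := hedgedec i
    exact ⟨x, y, hxy, by rw [hθb, hdec, hind x y hxy]⟩
  -- the sum functional
  let sumL : (W → ZMod 2) →ₗ[ZMod 2] ZMod 2 :=
    { toFun := fun f => ∑ u, f u
      map_add' := fun f g => by simp [Finset.sum_add_distrib]
      map_smul' := fun c f => by simp [Finset.mul_sum]
   }
  have hsum_single : ∀ x : W, sumL (Pi.single x 1) = 1 := by
    intro x
    show (∑ u, Pi.single x (1 : ZMod 2) u) = 1
    rw [Finset.sum_pi_single']
    rw [if_pos (Finset.mem_univ x)]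
  have hθsum : ∀ v : V, sumL (θ v) = 0 := by
    have hcomp : sumL.comp θ = 0 := by
      apply b.ext
      intro i
      rw [LinearMap.comp_apply, Basis.mk_apply]
      obtain ⟨x, y, hxy, hv⟩ := hθi i
      rw [hv, map_add, hsum_single, hsum_single, LinearMap.zero_apply]
      decide
    intro v
    simpa using congrFun (congrArg DFunLike.coe hcomp) v
  -- single dot products
  have hdots : ∀ (x : W) (g : W → ZMod 2),
      (∑ u, (Pi.single x 1 : W → ZMod 2) u * g u) = g x := by
    intro x g
    rw [Finset.sum_eq_single x]
    · rw [Pi.single_eq_same, one_mul]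
    · intro u _ hux
      rw [Pi.single_eq_of_ne hux, zero_mul]
    · intro h; exact absurd (Finset.mem_univ x) h
  have hdots' : ∀ (x : W) (f : W → ZMod 2),
      (∑ u, f u * (Pi.single x 1 : W → ZMod 2) u) = f x := by
    intro x f
    rw [Finset.sum_eq_single x]
    · rw [Pi.single_eq_same, mul_one]
    · intro u _ hux
      rw [Pi.single_eq_of_ne hux, mul_zero]
    · intro h; exact absurd (Finset.mem_univ x) h
  -- B is the dot product pulled back along θ
  have hBdot : ∀ v w : V, B v w = ∑ u, θ v u * θ w u := by
    let C : LinearMap.BilinForm (ZMod 2) V := LinearMap.mk₂ (ZMod 2)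
      (fun v w => ∑ u, θ v u * θ w u)
      (fun v v' w => by
        simp only [map_add, Pi.add_apply, add_mul, Finset.sum_add_distrib])
      (fun c v w => by
        simp only [map_smul, Pi.smul_apply, smul_eq_mul, mul_assoc, Finset.mul_sum])
      (fun v w w' => by
        simp only [map_add, Pi.add_apply, mul_add, Finset.sum_add_distrib])
      (fun c v w => by
        simp only [map_smul, Pi.smul_apply, smul_eq_mul, Finset.mul_sum]
        congr 1; funext u; ring)
    have hgen : ∀ i j : I, B (i : V) (j : V) = C (i : V) (j : V) := by
      intro i j
      have hCij : C (i : V) (j : V) = ∑ u, θ (i : V) u * θ (j : V) u := rfl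
      by_cases hij : i = j
      · subst hij
        rw [hB, hCij]
        have hsq : ∀ u, θ (i : V) u * θ (i : V) u = θ (i : V) u := by
          intro u
          rcases zmod2_cases (θ (i : V) u) with h | h <;> rw [h] <;> decide
        rw [Finset.sum_congr rfl (fun u _ => hsq u)]
        exact (hθsum (i : V)).symm
      · rw [hCij]
        have heq : ∀ u, θ (i : V) u * θ (j : V) u
            = if (u ∈ (e i : Sym2 W) ∧ u ∈ (e j : Sym2 W)) then 1 else 0 := by
          intro u
          rw [hθb, hθb]
          simp only [ind]
          by_cases h1 : u ∈ (e i : Sym2 W) <;> by_cases h2 : u ∈ (e j : Sym2 W) <;>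
            simp [h1, h2]
        rw [Finset.sum_congr rfl (fun u _ => heq u), Finset.sum_boole]
        by_cases hshare : ∃ u : W, u ∈ (e i : Sym2 W) ∧ u ∈ (e j : Sym2 W)
        · obtain ⟨u₀, hu₀⟩ := hshare
          have hfil : Finset.univ.filter
              (fun u => u ∈ (e i : Sym2 W) ∧ u ∈ (e j : Sym2 W)) = {u₀} := by
            apply Finset.eq_singleton_iff_unique_mem.mpr
            refine ⟨Finset.mem_filter.mpr ⟨Finset.mem_univ _, hu₀⟩, ?_⟩
            intro u hu
            have hu' := (Finset.mem_filter.mp hu).2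
            by_contra hne
            have h1 : (e i : Sym2 W) = s(u, u₀) :=
              (Sym2.mem_and_mem_iff hne).mp ⟨hu'.1, hu₀.1⟩
            have h2 : (e j : Sym2 W) = s(u, u₀) :=
              (Sym2.mem_and_mem_iff hne).mp ⟨hu'.2, hu₀.2⟩
            have : e i = e j := Subtype.ext (h1.trans h2.symm)
            exact hij (e.injective this)
          rw [hfil, Finset.card_singleton, Nat.cast_one]
          exact (he i j hij).mpr ⟨u₀, hu₀⟩
        · have hfil : Finset.univ.filter
              (fun u => u ∈ (e i : Sym2 W) ∧ u ∈ (e j : Sym2 W)) = ∅ := by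
            apply Finset.filter_eq_empty_iff.mpr
            intro u _
            exact fun hc => hshare ⟨u, hc⟩
          rw [hfil, Finset.card_empty, Nat.cast_zero]
          have hne1 : B (i : V) (j : V) ≠ 1 := fun hc => hshare ((he i j hij).mp hc)
          rcases zmod2_cases (B (i : V) (j : V)) with h | h
          · exact h
          · exact absurd h hne1
    have hBC : B = C := by
      apply b.ext; intro i
      apply LinearMap.ext; intro w
      have hw : w ∈ Submodule.span (ZMod 2) I := by rw [hIspan]; trivial
      induction hw using Submodule.span_induction with
      | mem w hw =>
        have hb : b i = (i : V) := Basis.mk_apply hI hspan' i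
        rw [hb]
        exact hgen i ⟨w, hw⟩
      | zero => simp
      | add w w' _ _ ihw ihw' => rw [map_add, ihw, ihw', map_add]
      | smul c w _ ihw => rw [map_smul, ihw, map_smul]
    intro v w
    rw [hBC]
    rfl
  have hBsymm : ∀ v w : V, B v w = B w v := by
    intro v w
    rw [hBdot, hBdot]
    exact Finset.sum_congr rfl (fun u _ => mul_comm _ _)
  -- pairs of vertex indicators are in the range of θ
  have hpair : ∀ x y : W,
      (Pi.single x 1 + Pi.single y 1 : W → ZMod 2) ∈ LinearMap.range θ := by
    have key : ∀ (x y : W), T.Walk x y →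
        (Pi.single x 1 + Pi.single y 1 : W → ZMod 2) ∈ LinearMap.range θ := by
      intro x y p
      induction p with
      | nil =>
        have hz : ∀ z : W, (Pi.single z 1 + Pi.single z 1 : W → ZMod 2) = 0 :=
          fun z => funext fun u => zmod2_add_self _
        rw [hz]; exact Submodule.zero_mem _
      | @cons a c d h p ih =>
        have hmem : s(a, c) ∈ T.edgeSet := T.mem_edgeSet.mpr h
        have h1 : (Pi.single a 1 + Pi.single c 1 : W → ZMod 2) ∈ LinearMap.range θ := by
          refine ⟨(e.symm ⟨s(a, c), hmem⟩ : I), ?_⟩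
          rw [hθb, Equiv.apply_symm_apply]
          exact hind a c h.ne
        have h2 := Submodule.add_mem _ h1 ih
        have heq : (Pi.single a 1 + Pi.single c 1 : W → ZMod 2)
            + (Pi.single c 1 + Pi.single d 1)
            = Pi.single a 1 + Pi.single d 1 := by
          funext u
          simp only [Pi.add_apply]
          have h3 : ∀ p r q : ZMod 2, p + r + (r + q) = p + q := by decide
          exact h3 _ _ _
        rwa [heq] at h2
    intro x y
    obtain ⟨p⟩ := hT.isConnected.preconnected x y
    exact key x y p
  -- orthogonality lemma
  have horth : ∀ g : W → ZMod 2, (∀ i : I, (∑ u, θ (i : V) u * g u) = 0) →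
      g = 0 ∨ g = fun _ => 1 := by
    intro g hg
    let D : (W → ZMod 2) →ₗ[ZMod 2] ZMod 2 :=
      { toFun := fun f => ∑ u, f u * g u
        map_add' := fun f f' => by
          simp [add_mul, Finset.sum_add_distrib]
        map_smul' := fun c f => by
          simp only [Pi.smul_apply, smul_eq_mul, mul_assoc, Finset.mul_sum, RingHom.id_apply] }
    have hDθ : D.comp θ = 0 := by
      apply b.ext
      intro i
      rw [LinearMap.comp_apply, Basis.mk_apply, LinearMap.zero_apply]
      exact hg i
    have hall : ∀ v : V, (∑ u, θ v u * g u) = 0 := by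
      intro v
      exact congrFun (congrArg DFunLike.coe hDθ) v
    have hconst : ∀ x y : W, g x = g y := by
      intro x y
      obtain ⟨v, hv⟩ := hpair x y
      have := hall v
      rw [hv] at this
      have hsum : (∑ u, ((Pi.single x 1 : W → ZMod 2) u
          + (Pi.single y 1 : W → ZMod 2) u) * g u)
          = g x + g y := by
        simp only [add_mul, Finset.sum_add_distrib]
        rw [hdots, hdots]
      simp only [Pi.add_apply] at this
      rw [hsum] at this
      have himp : ∀ a c : ZMod 2, a + c = 0 → a = c := by decide
      exact himp _ _ this
    rcases zmod2_cases (g x₀) with h | h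
    · left; funext x; rw [Pi.zero_apply, hconst x x₀, h]
    · right; funext x; rw [hconst x x₀, h]
  -- the range of θ is the kernel of the sum functional
  have hrange : LinearMap.range θ = LinearMap.ker sumL := by
    apply le_antisymm
    · rintro f ⟨v, rfl⟩
      exact LinearMap.mem_ker.mpr (hθsum v)
    · intro f hf
      exact aux_mem_of_sum_zero (LinearMap.range θ) hpair f (LinearMap.mem_ker.mp hf)
  -- θ is injective
  have hinj : Function.Injective θ := by
    have hsurj : LinearMap.range sumL = ⊤ := by
      rw [LinearMap.range_eq_top]
      intro c
      refine ⟨c • Pi.single x₀ 1, ?_⟩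
      rw [map_smul, hsum_single, smul_eq_mul, mul_one]
    have h1 : finrank (ZMod 2) (W → ZMod 2) = n + 1 := by
      rw [Module.finrank_fintype_fun_eq_card, hcardW]
    have h2 := LinearMap.finrank_range_add_finrank_ker sumL
    have h3 : finrank (ZMod 2) (LinearMap.range sumL) = 1 := by
      rw [hsurj, finrank_top, Module.finrank_self]
    have h4 := LinearMap.finrank_range_add_finrank_ker θ
    have h5 : finrank (ZMod 2) (LinearMap.range θ)
        = finrank (ZMod 2) (LinearMap.ker sumL) := by rw [hrange]
    have h6 : finrank (ZMod 2) (LinearMap.ker θ) = 0 := by omega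
    rw [← LinearMap.ker_eq_bot]
    exact Submodule.finrank_eq_zero.mp h6
  -- sum of the all-ones vector
  have hsumone : sumL (fun _ => (1 : ZMod 2)) = ((n + 1 : ℕ) : ZMod 2) := by
    show (∑ _u : W, (1 : ZMod 2)) = ((n + 1 : ℕ) : ZMod 2)
    rw [Finset.sum_const, nsmul_eq_mul, mul_one, ← hcardW]
    rfl
  -- the master lemma
  have hM : ∀ (u : W) (β : V),
      (∀ α : I, (B (α : V) β = 1 ↔ u ∈ (e α : Sym2 W))) ↔
        θ β = (fun _ => 1) + Pi.single u 1 := by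
    intro u β
    have hθu : ∀ i : I, θ (i : V) u = if u ∈ (e i : Sym2 W) then 1 else 0 := by
      intro i; rw [hθb]
    constructor
    · intro h
      set g : W → ZMod 2 := θ β + Pi.single u 1 with hgdef
      have hg : ∀ i : I, (∑ w, θ (i : V) w * g w) = 0 := by
        intro i
        have hBi : B (i : V) β = θ (i : V) u := by
          rw [hθu]
          by_cases hu : u ∈ (e i : Sym2 W)
          · rw [if_pos hu]; exact (h i).mpr hu
          · rw [if_neg hu]
            have hne1 : B (i : V) β ≠ 1 := fun hc => hu ((h i).mp hc)
            rcases zmod2_cases (B (i : V) β) with hc | hc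
            · exact hc
            · exact absurd hc hne1
        have : (∑ w, θ (i : V) w * g w)
            = (∑ w, θ (i : V) w * θ β w) + ∑ w, θ (i : V) w * (Pi.single u 1 : W → ZMod 2) w := by
          simp only [hgdef, Pi.add_apply, mul_add, Finset.sum_add_distrib]
        rw [this, ← hBdot, hdots', hBi]
        exact zmod2_add_self _
      rcases horth g hg with h0 | h1
      · exfalso
        have : sumL g = 1 := by
          rw [hgdef, map_add, hθsum, hsum_single, zero_add]
        rw [h0, map_zero] at this
        exact absurd this (by decide)
      · rw [hgdef] at h1
        funext w
        have hw := congrFun h1 w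
        rw [Pi.add_apply] at hw
        have himp : ∀ a c : ZMod 2, a + c = 1 → a = 1 + c := by decide
        rw [Pi.add_apply]
        exact himp _ _ hw
    · intro h α
      have hcalc : B (α : V) β = θ (α : V) u := by
        rw [hBdot, h]
        have : ∀ w, θ (α : V) w * (((fun _ => (1 : ZMod 2)) + Pi.single u 1 : W → ZMod 2)) w
            = θ (α : V) w + θ (α : V) w * (Pi.single u 1 : W → ZMod 2) w := by
          intro w; rw [Pi.add_apply]; ring
        rw [Finset.sum_congr rfl (fun w _ => this w), Finset.sum_add_distrib, hdots']
        have : (∑ w, θ (α : V) w) = 0 := hθsum (α : V)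
        rw [this, zero_add]
      rw [hcalc, hθu]
      by_cases hu : u ∈ (e α : Sym2 W)
      · rw [if_pos hu]; exact ⟨fun _ => hu, fun _ => rfl⟩
      · rw [if_neg hu]
        exact ⟨fun hc => absurd hc (by decide), fun hc => absurd hc hu⟩
  -- existence for even dimension
  have hexist : Even n → ∀ u : W, ∃ β : V,
      θ β = (fun _ => 1) + Pi.single u 1 := by
    intro h2 u
    have hmem : ((fun _ => 1) + Pi.single u 1 : W → ZMod 2) ∈ LinearMap.ker sumL := by
      rw [LinearMap.mem_ker, map_add, hsumone, hsum_single]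
      have : ((n + 1 : ℕ) : ZMod 2) = (n : ZMod 2) + 1 := by push_cast; ring
      rw [this]
      have hnz : (n : ZMod 2) = 0 := by
        rw [ZMod.natCast_eq_zero_iff]
        exact even_iff_two_dvd.mp h2
      rw [hnz, zero_add]
      decide
    rw [← hrange] at hmem
    exact hmem
  -- now the TFAE
  tfae_have 3 → 2 := by
    rintro ⟨u, β, hβ⟩
    have hθβ := (hM u β).mp hβ
    have h0 := hθsum β
    rw [hθβ, map_add, hsumone, hsum_single] at h0
    have : (n : ZMod 2) = 0 := by
      have hc : ((n + 1 : ℕ) : ZMod 2) = (n : ZMod 2) + 1 := by push_cast; ring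
      rw [hc] at h0
      have himp : ∀ a : ZMod 2, a + 1 + 1 = 0 → a = 0 := by decide
      exact himp _ h0
    rw [ZMod.natCast_eq_zero_iff] at this
    exact even_iff_two_dvd.mpr this
  tfae_have 2 → 4 := by
    intro h2 u
    obtain ⟨β, hθβ⟩ := hexist h2 u
    refine ⟨β, (hM u β).mpr hθβ, ?_⟩
    intro β' hβ'
    exact hinj (by rw [(hM u β').mp hβ', hθβ])
  tfae_have 4 → 3 := by
    intro h4
    obtain ⟨β, hβ, _⟩ := h4 x₀
    exact ⟨x₀, β, hβ⟩
  tfae_have 2 → 1 := by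
    intro h2 v hv
    have hg : ∀ i : I, (∑ u, θ (i : V) u * θ v u) = 0 := by
      intro i
      rw [← hBdot, hBsymm]
      exact hv _
    rcases horth (θ v) hg with h | h
    · apply hinj
      rw [h, map_zero]
    · exfalso
      have h0 := hθsum v
      rw [h, hsumone] at h0
      have hnz : (n : ZMod 2) = 0 := by
        rw [ZMod.natCast_eq_zero_iff]
        exact even_iff_two_dvd.mp h2
      have hc : ((n + 1 : ℕ) : ZMod 2) = (n : ZMod 2) + 1 := by push_cast; ring
      rw [hc, hnz, zero_add] at h0
      exact absurd h0 (by decide)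
  tfae_have 1 → 2 := by
    intro h1
    by_contra hodd
    have hnz : (n : ZMod 2) = 1 := by
      rcases zmod2_cases (n : ZMod 2) with h | h
      · exfalso
        rw [ZMod.natCast_eq_zero_iff] at h
        exact hodd (even_iff_two_dvd.mpr h)
      · exact h
    have hmem : ((fun _ => 1) : W → ZMod 2) ∈ LinearMap.ker sumL := by
      rw [LinearMap.mem_ker, hsumone]
      have hc : ((n + 1 : ℕ) : ZMod 2) = (n : ZMod 2) + 1 := by push_cast; ring
      rw [hc, hnz]
      decide
    rw [← hrange] at hmem
    obtain ⟨v, hv⟩ := hmem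
    have hv0 : ∀ w, B v w = 0 := by
      intro w
      rw [hBdot, hv]
      have : ∀ u, (fun _ => (1 : ZMod 2)) u * θ w u = θ w u := fun u => one_mul _
      rw [Finset.sum_congr rfl (fun u _ => this u)]
      exact hθsum w
    have hveq := h1 v hv0
    rw [hveq, map_zero] at hv
    have hx := congrFun hv x₀
    rw [Pi.zero_apply] at hx
    exact absurd hx (by decide)
  tfae_finish
end

section
/- Let V be a vector space over 𝔽₂ of finite positive dimension endowed with a symplectic form B. Let S be a linearly dependent spanning set of V such that G(S) is isomorphic to the line graph of a tree Υ (via an identification of S with the edge set of Υ). Then: (i) the radical of V is zero; (ii) the dimension of V is even; and (iii) for each pendant edge β of Υ, the set S \ {β} is a basis of V. -/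
open Module

section St10Aux

variable {V W : Type} [AddCommGroup V] [Module (ZMod 2) V]

lemma st10_zmod2_cases : ∀ x : ZMod 2, x = 0 ∨ x = 1 := by decide

lemma st10_zmod2_cancel : ∀ a b : ZMod 2, a + b = 0 → a = b := by decide

/-- degree-parity function of a finite subset of `S` at a vertex `u`. -/
def st10d {S : Set V} {Υ : SimpleGraph W} [DecidableEq W]
    (e : S ≃ Υ.edgeSet) (R : Finset S) (u : W) : ZMod 2 :=
  ∑ α ∈ R, if u ∈ (e α : Sym2 W) then 1 else 0

lemma st10_pairterm {S : Set V} {Υ : SimpleGraph W} [DecidableEq W]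
    (B : LinearMap.BilinForm (ZMod 2) V) (hB : ∀ v, B v v = 0)
    (e : S ≃ Υ.edgeSet)
    (he : ∀ a b : S, a ≠ b →
      ((B (a : V) (b : V) = 1) ↔ ∃ u : W, u ∈ (e a : Sym2 W) ∧ u ∈ (e b : Sym2 W)))
    (α β : S) (u v : W) (huv : (e β : Sym2 W) = s(u, v)) :
    B (α : V) (β : V)
      = (if u ∈ (e α : Sym2 W) then (1 : ZMod 2) else 0)
        + (if v ∈ (e α : Sym2 W) then 1 else 0) := by
  have huv' : u ≠ v := by
    have hd := Υ.not_isDiag_of_mem_edgeSet (e β).2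
    rw [huv] at hd
    simpa using hd
  have hu : u ∈ (e β : Sym2 W) := by rw [huv]; exact Sym2.mem_mk_left u v
  have hv : v ∈ (e β : Sym2 W) := by rw [huv]; exact Sym2.mem_mk_right u v
  by_cases hab : α = β
  · subst hab
    rw [hB, if_pos hu, if_pos hv]
    decide
  · have hne : (e α : Sym2 W) ≠ (e β : Sym2 W) := fun h => hab (e.injective (Subtype.ext h))
    by_cases h1 : u ∈ (e α : Sym2 W) <;> by_cases h2 : v ∈ (e α : Sym2 W)
    · exfalso
      apply hne
      rw [(Sym2.mem_and_mem_iff huv').1 ⟨h1, h2⟩, huv]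
    · have hBαβ : B (α : V) (β : V) = 1 := (he α β hab).2 ⟨u, h1, hu⟩
      rw [hBαβ, if_pos h1, if_neg h2, add_zero]
    · have hBαβ : B (α : V) (β : V) = 1 := (he α β hab).2 ⟨v, h2, hv⟩
      rw [hBαβ, if_neg h1, if_pos h2, zero_add]
    · rw [if_neg h1, if_neg h2, add_zero]
      rcases st10_zmod2_cases (B (α : V) (β : V)) with h | h
      · exact h
      · exfalso
        obtain ⟨w, hw1, hw2⟩ := (he α β hab).1 h
        rw [huv, Sym2.mem_iff] at hw2
        rcases hw2 with rfl | rfl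
        · exact h1 hw1
        · exact h2 hw1

lemma st10_pairsum {S : Set V} {Υ : SimpleGraph W} [DecidableEq W]
    (B : LinearMap.BilinForm (ZMod 2) V) (hB : ∀ v, B v v = 0)
    (e : S ≃ Υ.edgeSet)
    (he : ∀ a b : S, a ≠ b →
      ((B (a : V) (b : V) = 1) ↔ ∃ u : W, u ∈ (e a : Sym2 W) ∧ u ∈ (e b : Sym2 W)))
    (R : Finset S) (β : S) (u v : W) (huv : (e β : Sym2 W) = s(u, v)) :
    B (∑ α ∈ R, (α : V)) (β : V) = st10d e R u + st10d e R v := by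
  simp only [map_sum, LinearMap.coe_sum, Finset.sum_apply]
  rw [st10d, st10d, ← Finset.sum_add_distrib]
  exact Finset.sum_congr rfl fun α _ => st10_pairterm B hB e he α β u v huv

lemma st10_const {S : Set V} {Υ : SimpleGraph W} [DecidableEq W]
    (B : LinearMap.BilinForm (ZMod 2) V) (hB : ∀ v, B v v = 0)
    (hΥ : Υ.IsTree) (e : S ≃ Υ.edgeSet)
    (he : ∀ a b : S, a ≠ b →
      ((B (a : V) (b : V) = 1) ↔ ∃ u : W, u ∈ (e a : Sym2 W) ∧ u ∈ (e b : Sym2 W)))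
    (R : Finset S)
    (hN : ∀ β : S, B (∑ α ∈ R, (α : V)) (β : V) = 0) (u v : W) :
    st10d e R u = st10d e R v := by
  have hadj : ∀ a b : W, Υ.Adj a b → st10d e R a = st10d e R b := by
    intro a b hab
    set β : S := e.symm ⟨s(a, b), Υ.mem_edgeSet.2 hab⟩ with hβdef
    have hβ : (e β : Sym2 W) = s(a, b) := by
      rw [hβdef, Equiv.apply_symm_apply]
    have h := st10_pairsum B hB e he R β a b hβ
    rw [hN β] at h
    exact st10_zmod2_cancel _ _ h.symm
  have hr : Υ.Reachable u v := hΥ.1.preconnected u v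
  obtain ⟨p⟩ := hr
  induction p with
  | nil => rfl
  | cons h q ih => exact (hadj _ _ h).trans ih

lemma st10_pairsum_count {W : Type} [Fintype W] [DecidableEq W]
    (P : W → Prop) [DecidablePred P] (a b : W) (hab : a ≠ b) :
    ∑ w : W, (if P w ∧ w ∈ (s(a, b) : Sym2 W) then (1 : ZMod 2) else 0)
      = (if P a then 1 else 0) + (if P b then 1 else 0) := by
  have key : ∀ w : W, (if P w ∧ w ∈ (s(a, b) : Sym2 W) then (1 : ZMod 2) else 0)
      = (if w = a then (if P a then (1 : ZMod 2) else 0) else 0)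
        + (if w = b then (if P b then (1 : ZMod 2) else 0) else 0) := by
    intro w
    simp only [Sym2.mem_iff]
    by_cases hwa : w = a
    · subst hwa
      simp [hab]
    · by_cases hwb : w = b
      · subst hwb
        simp [hwa]
      · simp [hwa, hwb]
  simp only [key, Finset.sum_add_distrib]
  rw [Finset.sum_ite_eq' Finset.univ a, Finset.sum_ite_eq' Finset.univ b]
  simp

lemma st10_cut {S : Set V} {Υ : SimpleGraph W} [Fintype W] [DecidableEq W] [DecidableEq V]
    (e : S ≃ Υ.edgeSet) (R : Finset S) (f : S)
    (P : W → Prop) [DecidablePred P]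
    (hP : ∀ a b : W, Υ.Adj a b → s(a, b) ≠ (e f : Sym2 W) → (P a ↔ P b))
    (x y : W) (hxy : (e f : Sym2 W) = s(x, y)) (hx : ¬ P x) (hy : P y) :
    ∑ w : W, (if P w then st10d e R w else 0) = (if f ∈ R then 1 else 0) := by
  have hxyne : x ≠ y := by
    have hd := Υ.not_isDiag_of_mem_edgeSet (e f).2
    rw [hxy] at hd
    simpa using hd
  have hstep : ∀ w : W, (if P w then st10d e R w else 0)
      = ∑ α ∈ R, (if P w ∧ w ∈ (e α : Sym2 W) then (1 : ZMod 2) else 0) := by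
    intro w
    by_cases h : P w
    · rw [if_pos h, st10d]
      exact Finset.sum_congr rfl fun α _ => by
        by_cases h2 : w ∈ (e α : Sym2 W) <;> simp [h, h2]
    · rw [if_neg h]
      symm
      exact Finset.sum_eq_zero fun α _ => by simp [h]
  simp only [hstep]
  rw [Finset.sum_comm]
  have hterm : ∀ α ∈ R,
      (∑ w : W, if P w ∧ w ∈ (e α : Sym2 W) then (1 : ZMod 2) else 0)
        = (if α = f then 1 else 0) := by
    intro α _
    by_cases hα : α = f
    · subst hα
      rw [if_pos rfl]
      have : (∑ w : W, if P w ∧ w ∈ (e α : Sym2 W) then (1 : ZMod 2) else 0)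
          = (if P x then 1 else 0) + (if P y then 1 else 0) := by
        simp only [hxy]
        exact st10_pairsum_count P x y hxyne
      rw [this, if_neg hx, if_pos hy, zero_add]
    · rw [if_neg hα]
      obtain ⟨⟨a, b⟩, hab'⟩ := Quot.exists_rep (e α : Sym2 W)
      have hab : (e α : Sym2 W) = s(a, b) := hab'.symm
      have hane : a ≠ b := by
        have hd := Υ.not_isDiag_of_mem_edgeSet (e α).2
        rw [hab] at hd
        simpa using hd
      have hadj : Υ.Adj a b := by
        have h2 := (e α).2
        rw [hab] at h2
        exact Υ.mem_edgeSet.1 h2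
      have hPab : P a ↔ P b := by
        refine hP a b hadj ?_
        intro hcontra
        exact hα (e.injective (Subtype.ext (by rw [hab, hcontra])))
      have : (∑ w : W, if P w ∧ w ∈ (e α : Sym2 W) then (1 : ZMod 2) else 0)
          = (if P a then 1 else 0) + (if P b then 1 else 0) := by
        simp only [hab]
        exact st10_pairsum_count P a b hane
      rw [this]
      by_cases h : P a
      · rw [if_pos h, if_pos (hPab.1 h)]
        decide
      · rw [if_neg h, if_neg (fun hb => h (hPab.2 hb)), add_zero]
  rw [Finset.sum_congr rfl hterm, Finset.sum_ite_eq' R f (fun _ => (1 : ZMod 2))]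

lemma st10_leaf {S : Set V} {Υ : SimpleGraph W} [DecidableEq W] [DecidableEq V]
    (e : S ≃ Υ.edgeSet) {u : W} {β : S} (hu : u ∈ (e β : Sym2 W))
    (hleaf : ∀ w₁ w₂ : W, Υ.Adj u w₁ → Υ.Adj u w₂ → w₁ = w₂) (R : Finset S) :
    st10d e R u = if β ∈ R then 1 else 0 := by
  rw [st10d]
  have key : ∀ α ∈ R, (if u ∈ (e α : Sym2 W) then (1 : ZMod 2) else 0)
      = (if α = β then 1 else 0) := by
    intro α _
    by_cases h : u ∈ (e α : Sym2 W)
    · rw [if_pos h]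
      obtain ⟨w, hw⟩ := Sym2.mem_iff_exists.1 h
      obtain ⟨v', hv'⟩ := Sym2.mem_iff_exists.1 hu
      have h1 : Υ.Adj u w := by
        have := (e α).2; rw [hw] at this; exact Υ.mem_edgeSet.1 this
      have h2 : Υ.Adj u v' := by
        have := (e β).2; rw [hv'] at this; exact Υ.mem_edgeSet.1 this
      have hwv : w = v' := hleaf w v' h1 h2
      have hαβ : α = β := e.injective (Subtype.ext (by rw [hw, hv', hwv]))
      rw [if_pos hαβ]
    · rw [if_neg h, if_neg]
      rintro rfl
      exact h hu
  rw [Finset.sum_congr rfl key, Finset.sum_ite_eq' R β]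

/-- lift a `Finset V` contained in `S` to a `Finset S`. -/
def st10lift (S : Set V) (R : Finset V) (h : ∀ x ∈ R, x ∈ S) : Finset S :=
  R.attach.map ⟨fun x => ⟨x.1, h x.1 x.2⟩,
    by intro a b hab; have h' := congrArg Subtype.val hab; exact Subtype.ext h'⟩

lemma st10lift_mem (S : Set V) (R : Finset V) (h : ∀ x ∈ R, x ∈ S) (α : S) :
    α ∈ st10lift S R h ↔ (α : V) ∈ R := by
  simp only [st10lift, Finset.mem_map, Finset.mem_attach, true_and,
    Function.Embedding.coeFn_mk]
  constructor
  · rintro ⟨x, rfl⟩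
    exact x.2
  · intro hx
    exact ⟨⟨(α : V), hx⟩, Subtype.ext rfl⟩

lemma st10lift_sum (S : Set V) (R : Finset V) (h : ∀ x ∈ R, x ∈ S) :
    ∑ α ∈ st10lift S R h, (α : V) = ∑ x ∈ R, x := by
  rw [st10lift, Finset.sum_map]
  show ∑ x ∈ R.attach, (x : V) = ∑ x ∈ R, x
  exact Finset.sum_attach R fun x => x

lemma st10_dep {S : Set V} (hdep : ¬ LinearIndependent (ZMod 2) ((↑) : S → V)) :
    ∃ R : Finset S, R.Nonempty ∧ ∑ α ∈ R, (α : V) = 0 := by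
  rw [linearIndependent_iff] at hdep
  push_neg at hdep
  obtain ⟨l, hl0, hlne⟩ := hdep
  refine ⟨l.support, Finsupp.support_nonempty_iff.2 hlne, ?_⟩
  rw [Finsupp.linearCombination_apply, Finsupp.sum] at hl0
  rw [← hl0]
  refine Finset.sum_congr rfl fun α hα => ?_
  have h1 : l α = 1 := by
    rcases st10_zmod2_cases (l α) with h | h
    · exact absurd h (Finsupp.mem_support_iff.1 hα)
    · exact h
  rw [h1, one_smul]

lemma st10_indep (T : Set V)
    (h : ∀ R : Finset V, (∀ x ∈ R, x ∈ T) → ∑ x ∈ R, x = 0 → R = ∅) :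
    LinearIndependent (ZMod 2) ((↑) : T → V) := by
  classical
  rw [linearIndependent_iff]
  intro l hl
  have him : ∀ x ∈ l.support.image ((↑) : T → V), x ∈ T := by
    intro x hx
    obtain ⟨a, _, rfl⟩ := Finset.mem_image.1 hx
    exact a.2
  have hsum : ∑ x ∈ l.support.image ((↑) : T → V), x = 0 := by
    rw [Finset.sum_image (by intro a _ b _ hab; exact Subtype.ext hab)]
    rw [Finsupp.linearCombination_apply, Finsupp.sum] at hl
    rw [← hl]
    refine Finset.sum_congr rfl fun α hα => ?_
    have h1 : l α = 1 := by
      rcases st10_zmod2_cases (l α) with h' | h'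
      · exact absurd h' (Finsupp.mem_support_iff.1 hα)
      · exact h'
    rw [h1, one_smul]
  have hempty := h _ him hsum
  exact Finsupp.support_eq_empty.1 (Finset.image_eq_empty.1 hempty)

end St10Aux

/-- if `S` is a linearly dependent spanning set of `V` and `G(S)` is the line
graph of a tree `Υ` via an identification `e` of `S` with the edges of `Υ`, then: (i) the
radical of `V` is zero; (ii) `dim V` is even; (iii) for each pendant edge `β` of `Υ`, the
set `S \ {β}` is a basis of `V`. -/
theorem stmt10 {V W : Type} [AddCommGroup V] [Module (ZMod 2) V] [FiniteDimensional (ZMod 2) V]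
    (hdim : 0 < Module.finrank (ZMod 2) V)
    (B : LinearMap.BilinForm (ZMod 2) V) (hB : ∀ v, B v v = 0)
    (S : Set V) (hdep : ¬ LinearIndependent (ZMod 2) ((↑) : S → V))
    (hspan : Submodule.span (ZMod 2) S = ⊤)
    (Υ : SimpleGraph W) (hΥ : Υ.IsTree)
    (e : S ≃ Υ.edgeSet)
    (he : ∀ a b : S, a ≠ b →
      ((B (a : V) (b : V) = 1) ↔ ∃ u : W, u ∈ (e a : Sym2 W) ∧ u ∈ (e b : Sym2 W))) :
    (∀ v : V, (∀ w, B v w = 0) → v = 0) ∧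
      Even (Module.finrank (ZMod 2) V) ∧
      ∀ β : S, (∃ u ∈ (e β : Sym2 W), ∀ w₁ w₂ : W, Υ.Adj u w₁ → Υ.Adj u w₂ → w₁ = w₂) →
        LinearIndependent (ZMod 2) ((↑) : (S \ {(β : V)} : Set V) → V) ∧
          Submodule.span (ZMod 2) (S \ {(β : V)}) = ⊤ := by
  letI : DecidableEq V := Classical.decEq V
  letI : DecidableEq W := Classical.decEq W
  haveI : Finite V := Module.finite_of_finite (ZMod 2)
  haveI : Finite ↥S := Set.Finite.to_subtype (Set.toFinite S)
  haveI : Fintype ↥S := Fintype.ofFinite _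
  haveI : Finite ↥Υ.edgeSet := Finite.of_equiv _ e
  have hS_ne : S.Nonempty := by
    rcases Set.eq_empty_or_nonempty S with h | h
    · exfalso
      haveI : IsEmpty ↥S := Set.isEmpty_coe_sort.2 h
      exact hdep linearIndependent_empty_type
    · exact h
  -- W is finite
  haveI hWfin : Finite W := by
    obtain ⟨x0, hx0⟩ := hS_ne
    set α₀ : ↥S := ⟨x0, hx0⟩ with hα₀
    have hcov : ∀ w : W, ∃ g : Υ.edgeSet, w ∈ (g : Sym2 W) := by
      intro w
      obtain ⟨⟨a, b⟩, hab'⟩ := Quot.exists_rep (e α₀ : Sym2 W)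
      have hr : Υ.Reachable w a := hΥ.1.preconnected w a
      obtain ⟨p⟩ := hr
      cases p with
      | nil => exact ⟨e α₀, by rw [← hab']; exact Sym2.mem_mk_left _ _⟩
      | @cons _ c _ h q => exact ⟨⟨s(w, c), Υ.mem_edgeSet.2 h⟩, Sym2.mem_mk_left _ _⟩
    have hfin : (Set.univ : Set W).Finite := by
      have hsub : (Set.univ : Set W) ⊆ ⋃ g : Υ.edgeSet, {w | w ∈ (g : Sym2 W)} := by
        intro w _
        obtain ⟨g, hg⟩ := hcov w
        exact Set.mem_iUnion.2 ⟨g, hg⟩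
      refine Set.Finite.subset (Set.finite_iUnion ?_) hsub
      intro g
      obtain ⟨⟨a, b⟩, hab'⟩ := Quot.exists_rep (g : Sym2 W)
      have hsub2 : {w | w ∈ (g : Sym2 W)} ⊆ {a, b} := by
        intro w hw
        rw [← hab'] at hw
        simpa [Sym2.mem_iff] using hw
      exact Set.Finite.subset (Set.toFinite {a, b}) hsub2
    exact Set.finite_univ_iff.1 hfin
  haveI : Fintype W := Fintype.ofFinite W
  -- the canonical dependency R*
  obtain ⟨Rstar, hRne, hRsum⟩ := st10_dep hdep
  have hNstar : ∀ β : S, B (∑ α ∈ Rstar, (α : V)) (β : V) = 0 := by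
    intro β; rw [hRsum]; simp
  obtain ⟨w₀⟩ : Nonempty W := hΥ.1.nonempty
  have hd0 : ∀ w : W, st10d e (∅ : Finset ↥S) w = 0 := fun w => by simp [st10d]
  -- uniqueness of subsets with given degree parity function
  have hU : ∀ R₁ R₂ : Finset ↥S, (∀ w, st10d e R₁ w = st10d e R₂ w) → R₁ = R₂ := by
    intro R₁ R₂ hd
    ext f
    obtain ⟨⟨x, y⟩, hxy'⟩ := Quot.exists_rep (e f : Sym2 W)
    have hxy : (e f : Sym2 W) = s(x, y) := hxy'.symm
    set P : W → Prop := fun w => (Υ \ SimpleGraph.fromEdgeSet {(e f : Sym2 W)}).Reachable y w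
      with hPdef
    letI : DecidablePred P := fun w => Classical.dec _
    have hP : ∀ a b : W, Υ.Adj a b → s(a, b) ≠ (e f : Sym2 W) → (P a ↔ P b) := by
      intro a b hab hne
      have hadj : (Υ \ SimpleGraph.fromEdgeSet {(e f : Sym2 W)}).Adj a b := by
        rw [SimpleGraph.sdiff_adj, SimpleGraph.fromEdgeSet_adj]
        exact ⟨hab, fun hcon => hne (by simpa using hcon.1)⟩
      exact ⟨fun h => h.trans hadj.reachable, fun h => h.trans hadj.symm.reachable⟩
    have hx : ¬ P x := by
      have hbr := (SimpleGraph.isAcyclic_iff_forall_edge_isBridge.1 hΥ.2) (e f).2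
      rw [hxy, SimpleGraph.isBridge_iff] at hbr
      intro hcon
      apply hbr
      rw [hPdef, hxy] at hcon
      exact hcon.symm
    have hy : P y := SimpleGraph.Reachable.refl y
    have h1 := st10_cut e R₁ f P hP x y hxy hx hy
    have h2 := st10_cut e R₂ f P hP x y hxy hx hy
    have heq : (if f ∈ R₁ then (1 : ZMod 2) else 0) = (if f ∈ R₂ then 1 else 0) := by
      rw [← h1, ← h2]
      exact Finset.sum_congr rfl fun w _ => by rw [hd w]
    by_cases hf1 : f ∈ R₁ <;> by_cases hf2 : f ∈ R₂ <;>
      simp only [hf1, hf2, if_true, if_false, iff_true, iff_false] <;>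
      first
        | exact hf2
        | exact hf1
        | (exfalso; rw [if_pos hf1, if_neg hf2] at heq; exact one_ne_zero heq)
        | (exfalso; rw [if_neg hf1, if_pos hf2] at heq; exact one_ne_zero heq.symm)
        | exact fun h => h
  have hconst := st10_const B hB hΥ e he
  -- d R* is identically 1
  have hdstar1 : ∀ w, st10d e Rstar w = 1 := by
    rcases st10_zmod2_cases (st10d e Rstar w₀) with h | h
    · exfalso
      have : Rstar = ∅ :=
        hU Rstar ∅ (fun w => by rw [hconst Rstar hNstar w w₀, h, hd0])
      exact hRne.ne_empty this
    · intro w; rw [hconst Rstar hNstar w w₀, h]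
  -- the dichotomy
  have hdich : ∀ R : Finset ↥S,
      (∀ β : S, B (∑ α ∈ R, (α : V)) (β : V) = 0) → R = ∅ ∨ R = Rstar := by
    intro R hN
    rcases st10_zmod2_cases (st10d e R w₀) with h | h
    · left; exact hU R ∅ fun w => by rw [hconst R hN w w₀, h, hd0]
    · right; exact hU R Rstar fun w => by rw [hconst R hN w w₀, h, hdstar1]
  -- part (i)
  have part1 : ∀ v : V, (∀ w, B v w = 0) → v = 0 := by
    intro v hv
    have hvmem : v ∈ Submodule.span (ZMod 2) S := by rw [hspan]; trivial
    obtain ⟨c, hcsupp, hcsum⟩ := Submodule.mem_span_set.1 hvmem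
    set R : Finset ↥S := st10lift S c.support (fun x hx => hcsupp hx) with hRdef
    have hRv : ∑ α ∈ R, (α : V) = v := by
      rw [hRdef, st10lift_sum]
      rw [Finsupp.sum] at hcsum
      rw [← hcsum]
      refine Finset.sum_congr rfl fun x hx => ?_
      have h1 : c x = 1 := by
        rcases st10_zmod2_cases (c x) with h' | h'
        · exact absurd h' (Finsupp.mem_support_iff.1 hx)
        · exact h'
      rw [h1, one_smul]
    have hN : ∀ β : S, B (∑ α ∈ R, (α : V)) (β : V) = 0 := fun β => by
      rw [hRv]; exact hv β
    rcases hdich R hN with h | h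
    · rw [← hRv, h, Finset.sum_empty]
    · rw [← hRv, h, hRsum]
  -- card W is even
  have hWeven : Even (Fintype.card W) := by
    have h1 : ∑ w : W, st10d e Rstar w = (Fintype.card W : ZMod 2) := by
      rw [Finset.sum_congr rfl fun w _ => hdstar1 w, Finset.sum_const, Finset.card_univ,
        nsmul_eq_mul, mul_one]
    have h2 : ∑ w : W, st10d e Rstar w = 0 := by
      simp only [st10d]
      rw [Finset.sum_comm]
      refine Finset.sum_eq_zero fun α _ => ?_
      obtain ⟨⟨a, b⟩, hab'⟩ := Quot.exists_rep (e α : Sym2 W)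
      have hab : (e α : Sym2 W) = s(a, b) := hab'.symm
      have hane : a ≠ b := by
        have hd := Υ.not_isDiag_of_mem_edgeSet (e α).2
        rw [hab] at hd
        simpa using hd
      have step1 : (∑ w : W, if w ∈ (e α : Sym2 W) then (1 : ZMod 2) else 0)
          = ∑ w : W, (if (fun _ : W => True) w ∧ w ∈ (s(a, b) : Sym2 W) then (1 : ZMod 2) else 0) := by
        refine Finset.sum_congr rfl fun w _ => ?_
        rw [hab]
        simp
      rw [step1, st10_pairsum_count (fun _ : W => True) a b hane]
      simp
      decide
    have hcast : (Fintype.card W : ZMod 2) = 0 := by rw [← h1, h2]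
    have hdvd := (ZMod.natCast_eq_zero_iff _ _).1 hcast
    obtain ⟨k, hk⟩ := hdvd
    exact ⟨k, by omega⟩
  -- rank computation
  set φ : (↥S →₀ ZMod 2) →ₗ[ZMod 2] V :=
    Finsupp.linearCombination (ZMod 2) ((↑) : ↥S → V) with hφ
  have hrange : LinearMap.range φ = ⊤ := by
    rw [hφ, Finsupp.range_linearCombination, Subtype.range_coe, hspan]
  have hsupport_sum : ∀ l : ↥S →₀ ZMod 2, φ l = ∑ α ∈ l.support, (α : V) := by
    intro l
    rw [hφ, Finsupp.linearCombination_apply, Finsupp.sum]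
    refine Finset.sum_congr rfl fun α hα => ?_
    have h1 : l α = 1 := by
      rcases st10_zmod2_cases (l α) with h' | h'
      · exact absurd h' (Finsupp.mem_support_iff.1 hα)
      · exact h'
    rw [h1, one_smul]
  set lstar : ↥S →₀ ZMod 2 :=
    Finsupp.equivFunOnFinite.symm (fun α => if α ∈ Rstar then 1 else 0) with hlstar
  have hlstar_apply : ∀ α, lstar α = if α ∈ Rstar then 1 else 0 := fun α => by
    rw [hlstar]; rfl
  have hlstar_supp : lstar.support = Rstar := by
    ext α
    rw [Finsupp.mem_support_iff, hlstar_apply]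
    by_cases h : α ∈ Rstar <;> simp [h]
  have hlstar_ker : φ lstar = 0 := by rw [hsupport_sum, hlstar_supp, hRsum]
  have hlstar_ne : lstar ≠ 0 := by
    intro h
    have : Rstar = ∅ := by rw [← hlstar_supp, h, Finsupp.support_zero]
    exact hRne.ne_empty this
  have hker : LinearMap.ker φ = Submodule.span (ZMod 2) {lstar} := by
    apply le_antisymm
    · intro l hl
      rw [LinearMap.mem_ker] at hl
      have hσ : ∑ α ∈ l.support, (α : V) = 0 := by rw [← hsupport_sum l]; exact hl
      have hN' : ∀ β : S, B (∑ α ∈ l.support, (α : V)) (β : V) = 0 := fun β => by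
        rw [hσ]; simp
      rcases hdich l.support hN' with h | h
      · have : l = 0 := Finsupp.support_eq_empty.1 h
        rw [this]
        exact Submodule.zero_mem _
      · have hleq : l = lstar := by
          ext α
          rw [hlstar_apply]
          by_cases hm : α ∈ Rstar
          · rw [if_pos hm]
            have hmem : α ∈ l.support := by rw [h]; exact hm
            have hne0 := Finsupp.mem_support_iff.1 hmem
            rcases st10_zmod2_cases (l α) with h' | h'
            · exact absurd h' hne0
            · exact h'
          · rw [if_neg hm]
            have : α ∉ l.support := by rw [h]; exact hm
            exact Finsupp.notMem_support_iff.1 this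
        rw [hleq]
        exact Submodule.mem_span_singleton_self _
    · rw [Submodule.span_le]
      exact Set.singleton_subset_iff.2 (LinearMap.mem_ker.2 hlstar_ker)
  have hkerrank : finrank (ZMod 2) (LinearMap.ker φ) = 1 := by
    rw [hker]; exact finrank_span_singleton hlstar_ne
  have hrn := LinearMap.finrank_range_add_finrank_ker φ
  rw [hrange, finrank_top, hkerrank, Module.finrank_finsupp_self] at hrn
  -- hrn : finrank V + 1 = Fintype.card ↥S
  haveI : Fintype ↥Υ.edgeSet := Fintype.ofFinite _
  have hcardS : Fintype.card ↥S = Fintype.card ↥Υ.edgeSet := Fintype.card_congr e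
  have hcardW : Fintype.card ↥Υ.edgeSet + 1 = Fintype.card W := by
    rw [← SimpleGraph.edgeFinset_card]
    exact hΥ.card_edgeFinset
  have part2 : Even (Module.finrank (ZMod 2) V) := by
    obtain ⟨k, hk⟩ := hWeven
    exact ⟨k - 1, by omega⟩
  refine ⟨part1, part2, ?_⟩
  -- part (iii)
  intro β hβ
  obtain ⟨u, hu, hleaf⟩ := hβ
  have hβstar : β ∈ Rstar := by
    have h := st10_leaf e hu hleaf Rstar
    rw [hdstar1 u] at h
    by_contra hn
    rw [if_neg hn] at h
    exact one_ne_zero h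
  constructor
  · -- linear independence of S \ {β}
    apply st10_indep
    intro R hsub hsum
    have hsubS : ∀ x ∈ R, x ∈ S := fun x hx => (hsub x hx).1
    set R' := st10lift S R hsubS with hR'def
    have hσ : ∑ α ∈ R', (α : V) = 0 := by rw [hR'def, st10lift_sum]; exact hsum
    have hN : ∀ γ : S, B (∑ α ∈ R', (α : V)) (γ : V) = 0 := fun γ => by rw [hσ]; simp
    rcases hdich R' hN with h | h
    · rw [Finset.eq_empty_iff_forall_notMem]
      intro x hx
      have hmem : (⟨x, hsubS x hx⟩ : ↥S) ∈ R' := (st10lift_mem S R hsubS _).2 hx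
      rw [h] at hmem
      exact absurd hmem (Finset.notMem_empty _)
    · exfalso
      have hmem : β ∈ R' := by rw [h]; exact hβstar
      have hxR : (β : V) ∈ R := (st10lift_mem S R hsubS β).1 hmem
      exact (hsub _ hxR).2 rfl
  · -- span of S \ {β}
    have h2V : ∀ x : V, x + x = 0 := by
      intro x
      have h2 : (2 : ZMod 2) • x = x + x := two_smul _ x
      have h0 : (2 : ZMod 2) = 0 := by decide
      rw [h0, zero_smul] at h2
      exact h2.symm
    have hsum_erase : ∑ α ∈ Rstar.erase β, (α : V) = (β : V) := by
      have h := Finset.sum_erase_add Rstar (fun α : ↥S => (α : V)) hβstar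
      rw [hRsum] at h
      calc ∑ α ∈ Rstar.erase β, (α : V)
          = ∑ α ∈ Rstar.erase β, (α : V) + ((β : V) + (β : V)) := by
            rw [h2V ((β : V)), add_zero]
        _ = (∑ α ∈ Rstar.erase β, (α : V) + (β : V)) + (β : V) := (add_assoc _ _ _).symm
        _ = 0 + (β : V) := by rw [h]
        _ = (β : V) := zero_add _
    have hle : Submodule.span (ZMod 2) S ≤ Submodule.span (ZMod 2) (S \ {(β : V)}) := by
      rw [Submodule.span_le]
      intro x hx
      by_cases hxβ : x = (β : V)
      · subst hxβ
        rw [SetLike.mem_coe]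
        have hmem : (∑ α ∈ Rstar.erase β, (α : V)) ∈
            Submodule.span (ZMod 2) (S \ {(β : V)}) := by
          refine Submodule.sum_mem _ fun α hα => ?_
          refine Submodule.subset_span ⟨α.2, ?_⟩
          intro hc
          exact Finset.ne_of_mem_erase hα (Subtype.ext hc)
        rwa [hsum_erase] at hmem
      · exact Submodule.subset_span ⟨hx, hxβ⟩
    rw [hspan] at hle
    exact top_le_iff.1 hle
end

section
/- Let V be a vector space over 𝔽₂ of finite positive dimension endowed with a symplectic form B whose radical is zero, of even dimension 2m ≥ 2. Let I be a basis of V such that G(I) is the line graph of a tree T (via an identification of I with the edges of T), let u be a vertex of T, and let β be the unique vector of V such that for all α ∈ I, B(α,β) = 1 iff u is incident to the edge α in T. Set S = I ∪ {β}, and suppose S is linearly dependent. Let Υ be the tree obtained from T by adding a new pendant edge incident to u, identified with β. Then G(S) is the line graph of Υ. -/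
open Module

/-- The tree obtained from `T` by adding a new pendant edge incident to `u`
(the new leaf is `Sum.inr ()`). -/
def addPendant {W : Type} (T : SimpleGraph W) (u : W) : SimpleGraph (W ⊕ Unit) :=
  SimpleGraph.fromRel fun a b =>
    (∃ x y : W, T.Adj x y ∧ a = Sum.inl x ∧ b = Sum.inl y) ∨
      (a = Sum.inl u ∧ b = Sum.inr ())

lemma addPendant_adj_inl_inl {W : Type} (T : SimpleGraph W) (u : W) (x y : W) :
    (addPendant T u).Adj (Sum.inl x) (Sum.inl y) ↔ T.Adj x y := by
  simp only [addPendant, SimpleGraph.fromRel_adj]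
  constructor
  · rintro ⟨hne, (⟨x', y', h, hx, hy⟩ | ⟨h1, h2⟩) | (⟨x', y', h, hx, hy⟩ | ⟨h1, h2⟩)⟩
    · rw [Sum.inl.injEq] at hx hy; subst hx; subst hy; exact h
    · exact absurd h2 (by simp)
    · rw [Sum.inl.injEq] at hx hy; subst hx; subst hy; exact h.symm
    · exact absurd h2 (by simp)
  · intro h
    exact ⟨by simpa using h.ne, Or.inl (Or.inl ⟨x, y, h, rfl, rfl⟩)⟩

lemma addPendant_adj_pend {W : Type} (T : SimpleGraph W) (u : W) (x : W) :
    (addPendant T u).Adj (Sum.inl x) (Sum.inr ()) ↔ x = u := by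
  constructor
  · intro h
    simp only [addPendant, SimpleGraph.fromRel_adj] at h
    rcases h with ⟨hne, (⟨x', y', h, hx, hy⟩ | ⟨h1, h2⟩) | (⟨x', y', h, hx, hy⟩ | ⟨h1, h2⟩)⟩
    · exact absurd hy (by simp)
    · rw [Sum.inl.injEq] at h1; exact h1
    · exact absurd hx (by simp)
    · exact absurd h1 (by simp)
  · rintro rfl
    exact ⟨by simp, Or.inl (Or.inr ⟨rfl, rfl⟩)⟩

lemma addPendant_map_mem {W : Type} (T : SimpleGraph W) (u : W) {w : Sym2 W}
    (hw : w ∈ T.edgeSet) : Sym2.map Sum.inl w ∈ (addPendant T u).edgeSet := by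
  induction w using Sym2.ind with
  | _ x y =>
    rw [Sym2.map_pair_eq, SimpleGraph.mem_edgeSet, addPendant_adj_inl_inl]
    exact hw

lemma addPendant_pend_mem {W : Type} (T : SimpleGraph W) (u : W) :
    s(Sum.inl u, Sum.inr ()) ∈ (addPendant T u).edgeSet :=
  (addPendant_adj_pend T u u).mpr rfl

lemma addPendant_edge {W : Type} (T : SimpleGraph W) (u : W) (z : Sym2 (W ⊕ Unit))
    (hz : z ∈ (addPendant T u).edgeSet) :
    z = s(Sum.inl u, Sum.inr ()) ∨ ∃ w ∈ T.edgeSet, z = Sym2.map Sum.inl w := by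
  induction z using Sym2.ind with
  | _ a b =>
    rw [SimpleGraph.mem_edgeSet] at hz
    simp only [addPendant, SimpleGraph.fromRel_adj] at hz
    rcases hz with ⟨hne, (⟨x, y, h, rfl, rfl⟩ | ⟨rfl, rfl⟩) | (⟨x, y, h, rfl, rfl⟩ | ⟨rfl, rfl⟩)⟩
    · exact Or.inr ⟨s(x, y), h, (Sym2.map_pair_eq _ _ _).symm⟩
    · exact Or.inl rfl
    · exact Or.inr ⟨s(y, x), h.symm, by rw [Sym2.map_pair_eq, Sym2.eq_swap]⟩
    · exact Or.inl (Sym2.eq_swap)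

/-- radical zero, `dim V = 2m ≥ 2`, `I` a basis with `G(I)` the line graph
of a tree `T` via `e`, `u` a vertex of `T`, `β` the vector dual to `u`; if `S = I ∪ {β}` is
linearly dependent, then `G(S)` is the line graph of the tree `Υ` obtained from `T` by
adding a pendant edge at `u` (identified with `β`). -/
theorem stmt16 {V W : Type} [AddCommGroup V] [Module (ZMod 2) V] [FiniteDimensional (ZMod 2) V]
    (B : LinearMap.BilinForm (ZMod 2) V) (hB : ∀ v, B v v = 0)
    (hrad : ∀ v : V, (∀ w, B v w = 0) → v = 0)
    (m : ℕ) (hm : 1 ≤ m) (hdim : Module.finrank (ZMod 2) V = 2 * m)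
    (I : Set V) (hI : LinearIndependent (ZMod 2) ((↑) : I → V))
    (hIspan : Submodule.span (ZMod 2) I = ⊤)
    (T : SimpleGraph W) (hT : T.IsTree)
    (e : I ≃ T.edgeSet)
    (he : ∀ a b : I, a ≠ b →
      ((B (a : V) (b : V) = 1) ↔ ∃ u : W, u ∈ (e a : Sym2 W) ∧ u ∈ (e b : Sym2 W)))
    (u : W) (β : V)
    (hβ : ∀ α : I, (B (α : V) β = 1 ↔ u ∈ (e α : Sym2 W)))
    (S : Set V) (hS : S = insert β I)
    (hdep : ¬ LinearIndependent (ZMod 2) ((↑) : S → V)) :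
    Nonempty (graphOf B hB S ≃g (addPendant T u).lineGraph) := by
  classical
  subst hS
  have hBsymm : ∀ v w : V, B v w = B w v := by
    intro v w
    have h := hB (v + w)
    simp only [map_add, LinearMap.add_apply, hB, zero_add, add_zero] at h
    have h2 := eq_neg_of_add_eq_zero_left h
    rw [CharTwo.neg_eq] at h2
    exact h2.symm
  have hβI : β ∉ I := by
    intro h
    exact hdep (by rw [Set.insert_eq_self.mpr h]; exact hI)
  have hval : ∀ x : ↥(insert β I), (x : V) ∉ I → (x : V) = β := by
    intro x hx
    rcases x.2 with h | h
    · exact h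
    · exact absurd h hx
  -- the bijection on vertex sets
  let f : ↥(insert β I) → ↥(addPendant T u).edgeSet := fun x =>
    if h : (x : V) ∈ I then
      ⟨Sym2.map Sum.inl (e ⟨(x : V), h⟩ : Sym2 W), addPendant_map_mem T u (e ⟨(x : V), h⟩).2⟩
    else ⟨s(Sum.inl u, Sum.inr ()), addPendant_pend_mem T u⟩
  have hfI : ∀ (x : ↥(insert β I)) (h : (x : V) ∈ I),
      f x = ⟨Sym2.map Sum.inl (e ⟨(x : V), h⟩ : Sym2 W),
        addPendant_map_mem T u (e ⟨(x : V), h⟩).2⟩ := by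
    intro x h
    simp only [f, dif_pos h]
  have hfβ : ∀ (x : ↥(insert β I)), (x : V) ∉ I →
      f x = ⟨s(Sum.inl u, Sum.inr ()), addPendant_pend_mem T u⟩ := by
    intro x h
    simp only [f, dif_neg h]
  have hpendne : ∀ w : Sym2 W, Sym2.map Sum.inl w ≠ s(Sum.inl u, Sum.inr ()) := by
    intro w hw
    have : (Sum.inr () : W ⊕ Unit) ∈ Sym2.map Sum.inl w := by
      rw [hw]; simp
    rw [Sym2.mem_map] at this
    obtain ⟨a, _, ha⟩ := this
    exact absurd ha (by simp)
  have hinj : Function.Injective f := by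
    intro x y hxy
    by_cases hx : (x : V) ∈ I <;> by_cases hy : (y : V) ∈ I
    · rw [hfI x hx, hfI y hy] at hxy
      have h1 : Sym2.map Sum.inl (e ⟨(x : V), hx⟩ : Sym2 W)
          = Sym2.map Sum.inl (e ⟨(y : V), hy⟩ : Sym2 W) := congrArg Subtype.val hxy
      have h2 := Sym2.map.injective Sum.inl_injective h1
      have h3 : e ⟨(x : V), hx⟩ = e ⟨(y : V), hy⟩ := Subtype.ext h2
      have h4 := e.injective h3
      have h5 : (x : V) = (y : V) := congrArg (fun z : I => (z : V)) h4
      exact Subtype.ext h5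
    · rw [hfI x hx, hfβ y hy] at hxy
      exact absurd (congrArg Subtype.val hxy) (hpendne _)
    · rw [hfβ x hx, hfI y hy] at hxy
      exact absurd (congrArg Subtype.val hxy).symm (hpendne _)
    · exact Subtype.ext ((hval x hx).trans (hval y hy).symm)
  have hsurj : Function.Surjective f := by
    rintro ⟨z, hz⟩
    rcases addPendant_edge T u z hz with h | ⟨w, hw, rfl⟩
    · refine ⟨⟨β, Set.mem_insert β I⟩, ?_⟩
      rw [hfβ _ hβI]
      exact Subtype.ext h.symm
    · refine ⟨⟨(e.symm ⟨w, hw⟩ : V), Set.mem_insert_of_mem _ (e.symm ⟨w, hw⟩).2⟩, ?_⟩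
      rw [hfI _ (e.symm ⟨w, hw⟩).2]
      apply Subtype.ext
      show Sym2.map Sum.inl (e ⟨((e.symm ⟨w, hw⟩ : I) : V), _⟩ : Sym2 W) = Sym2.map Sum.inl w
      congr 1
      have : (⟨((e.symm ⟨w, hw⟩ : I) : V), (e.symm ⟨w, hw⟩).2⟩ : I) = e.symm ⟨w, hw⟩ := rfl
      rw [this, Equiv.apply_symm_apply]
  have hne' : ∀ {x y : ↥(insert β I)}, x ≠ y → (x : V) ≠ (y : V) :=
    fun h hc => h (Subtype.ext hc)
  refine ⟨⟨Equiv.ofBijective f ⟨hinj, hsurj⟩, ?_⟩⟩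
  intro a b
  show (addPendant T u).lineGraph.Adj (f a) (f b) ↔ B (a : V) (b : V) = 1
  rw [SimpleGraph.lineGraph_adj_iff_exists]
  by_cases hab : a = b
  · subst hab
    constructor
    · rintro ⟨h, -⟩; exact absurd rfl h
    · intro h; rw [hB] at h; exact absurd h (by decide)
  · have hfne : f a ≠ f b := fun h => hab (hinj h)
    rw [and_iff_right hfne]
    by_cases ha : (a : V) ∈ I <;> by_cases hb : (b : V) ∈ I
    · have hAB : (⟨(a : V), ha⟩ : I) ≠ ⟨(b : V), hb⟩ :=
        fun h => hne' hab (congrArg (fun z : I => (z : V)) h)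
      rw [he ⟨(a : V), ha⟩ ⟨(b : V), hb⟩ hAB, hfI a ha, hfI b hb]
      constructor
      · rintro ⟨v, hva, hvb⟩
        rw [Sym2.mem_map] at hva hvb
        obtain ⟨w₁, hw₁, rfl⟩ := hva
        obtain ⟨w₂, hw₂, hww⟩ := hvb
        have := Sum.inl_injective hww
        subst this
        exact ⟨w₂, hw₁, hw₂⟩
      · rintro ⟨w, h1, h2⟩
        exact ⟨Sum.inl w, Sym2.mem_map.mpr ⟨w, h1, rfl⟩, Sym2.mem_map.mpr ⟨w, h2, rfl⟩⟩
    · have hbβ := hval b hb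
      rw [hbβ, hβ ⟨(a : V), ha⟩, hfI a ha, hfβ b hb]
      constructor
      · rintro ⟨v, hva, hvb⟩
        rw [Sym2.mem_iff] at hvb
        rcases hvb with rfl | rfl
        · rw [Sym2.mem_map] at hva
          obtain ⟨w₁, hw₁, hw⟩ := hva
          rw [Sum.inl.injEq] at hw
          exact hw ▸ hw₁
        · rw [Sym2.mem_map] at hva
          obtain ⟨w₁, -, hw⟩ := hva
          exact absurd hw (by simp)
      · intro h
        exact ⟨Sum.inl u, Sym2.mem_map.mpr ⟨u, h, rfl⟩, Sym2.mem_iff.mpr (Or.inl rfl)⟩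
    · have haβ := hval a ha
      have : B (a : V) (b : V) = B (b : V) β := by rw [haβ, hBsymm]
      rw [this, hβ ⟨(b : V), hb⟩, hfβ a ha, hfI b hb]
      constructor
      · rintro ⟨v, hva, hvb⟩
        rw [Sym2.mem_iff] at hva
        rcases hva with rfl | rfl
        · rw [Sym2.mem_map] at hvb
          obtain ⟨w₁, hw₁, hw⟩ := hvb
          rw [Sum.inl.injEq] at hw
          exact hw ▸ hw₁
        · rw [Sym2.mem_map] at hvb
          obtain ⟨w₁, -, hw⟩ := hvb
          exact absurd hw (by simp)
      · intro h
        exact ⟨Sum.inl u, Sym2.mem_iff.mpr (Or.inl rfl), Sym2.mem_map.mpr ⟨u, h, rfl⟩⟩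
    · exact absurd ((hval a ha).trans (hval b hb).symm) (hne' hab)
end
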